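/- arXiv:1707.07320 — 7 statements merged into one kernel-verified Lean document; each statement's English description precedes it below -/
import Mathlib

section
/- Every tree T ⊆ ω₁^{<ω} with the property that for every s ∈ T the restricted tree T↾ₛ is uncountable, contains a wide subtree S ⊆ T. -/
noncomputable section

/-- The type of countable ordinals, i.e. `ω₁` as a linearly ordered type. -/
abbrev W1 : Type := (Cardinal.aleph 1).ord.ToType

/-- A tree: a set of strings (finite sequences of countable ordinals)
closed under initial segments. -/
def IsTree (T : Set (List W1)) : Prop := ∀ s ∈ T, ∀ t : List W1, t <+: s → t ∈ T

/-- The set of immediate successors of `s` in `T`. -/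
def succs (T : Set (List W1)) (s : List W1) : Set (List W1) :=
  {t ∈ T | s <+: t ∧ t.length = s.length + 1}

/-- Branching nodes of `T`: nodes with at least two immediate successors. -/
def BN (T : Set (List W1)) : Set (List W1) :=
  {s ∈ T | 2 ≤ Cardinal.mk ↥(succs T s)}

/-- Branching nodes of `T` lying strictly below `s`. -/
def belowBN (T : Set (List W1)) (s : List W1) : Set (List W1) :=
  {u ∈ BN T | u <+: s ∧ u ≠ s}

/-- `BN_n(T)`: branching nodes with exactly `n` branching nodes strictly below. -/
def BNn (T : Set (List W1)) (n : ℕ) : Set (List W1) :=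
  {s ∈ BN T | (belowBN T s).Finite ∧ (belowBN T s).ncard = n}

/-- The restricted tree `T↾ₛ`. -/
def restr (T : Set (List W1)) (s : List W1) : Set (List W1) :=
  {t ∈ T | s <+: t ∨ t <+: s}

/-- A wide tree: nonempty tree, every node extends to a branching node,
and every branching node has `ℵ₁`-many immediate successors. -/
def Wide (T : Set (List W1)) : Prop :=
  T.Nonempty ∧ IsTree T ∧ (∀ s ∈ T, ∃ t ∈ BN T, s <+: t) ∧
    ∀ s ∈ BN T, Cardinal.mk ↥(succs T s) = Cardinal.aleph 1

/-- The initial segment `x↾m` of an infinite sequence. -/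
def seg (x : ℕ → W1) (m : ℕ) : List W1 := List.ofFn (fun i : Fin m => x i.1)

/-- `[T]`: the set of infinite branches of `T`. -/
def branches (T : Set (List W1)) : Set (ℕ → W1) := {x | ∀ m, seg x m ∈ T}

/-- `S ⊆_n T` : `BN_n(T) ⊆ S ⊆ T`. -/
def SubN (S T : Set (List W1)) (n : ℕ) : Prop := BNn T n ⊆ S ∧ S ⊆ T

/-- `S ⊆'_n T` : `S ⊆ T` and `BN_{n-1}(S) = BN_{n-1}(T)` (just `⊆` when `n = 0`). -/
def SubN' (S T : Set (List W1)) (n : ℕ) : Prop :=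
  S ⊆ T ∧ ∀ m : ℕ, n = m + 1 → BNn S m = BNn T m

namespace Stmt1Aux
open Cardinal

/-- `u` is a "good" (branching, with ℵ₁ successors) extension of `s` in `T`. -/
def GoodExt (T : Set (List W1)) (s u : List W1) : Prop :=
  u ∈ T ∧ Cardinal.aleph 1 ≤ Cardinal.mk ↥(succs T u) ∧ s <+: u

/-- The generated skeleton of branching nodes. -/
inductive Gen (T : Set (List W1)) (f : List W1 → List W1) : List W1 → Prop
  | base : Gen T f (f [])
  | step (t : List W1) (γ : W1) : Gen T f t → (t ++ [γ]) ∈ T → Gen T f (f (t ++ [γ]))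

/-- The selection function picks minimal-length good extensions. -/
def HF (T : Set (List W1)) (f : List W1 → List W1) : Prop :=
  ∀ s ∈ T, GoodExt T s (f s) ∧ ∀ v, GoodExt T s v → (f s).length ≤ v.length

lemma mk_W1 : Cardinal.mk W1 = Cardinal.aleph 1 :=
  Cardinal.mk_ord_toType (Cardinal.aleph 1)

lemma succs_shape {T : Set (List W1)} {t r : List W1} (hr : r ∈ succs T t) :
    ∃ x : W1, r = t ++ [x] := by
  obtain ⟨hrT, ⟨d, hd⟩, hlen⟩ := hr
  have hd1 : d.length = 1 := by
    rw [← hd, List.length_append] at hlen; omega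
  obtain ⟨x, hx⟩ := List.length_eq_one_iff.mp hd1
  exact ⟨x, by rw [← hd, hx]⟩

lemma succs_le {T : Set (List W1)} {t : List W1} :
    Cardinal.mk ↥(succs T t) ≤ Cardinal.aleph 1 := by
  rw [← mk_W1]
  have hsh : ∀ r : succs T t, ∃ x : W1, (r : List W1) = t ++ [x] := fun r => succs_shape r.2
  choose g hg using hsh
  apply Cardinal.mk_le_of_injective (f := g)
  intro r₁ r₂ hx
  apply Subtype.ext
  rw [hg r₁, hg r₂, hx]

lemma exists_goodExt {T : Set (List W1)} (hT : IsTree T)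
    (h : ∀ s ∈ T, ¬ (restr T s).Countable) {s : List W1} (hs : s ∈ T) :
    ∃ u, GoodExt T s u := by
  by_contra hcon
  push_neg at hcon
  have hc : ∀ u ∈ T, s <+: u → (succs T u).Countable := by
    intro u hu hsu
    rcases le_or_gt (Cardinal.aleph 1) (Cardinal.mk ↥(succs T u)) with hge | hlt
    · exact absurd ⟨hu, hge, hsu⟩ (hcon u)
    · rw [← Cardinal.succ_aleph0, Order.lt_succ_iff] at hlt
      exact Set.countable_coe_iff.mp (Cardinal.mk_le_aleph0_iff.mp hlt)
  apply h s hs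
  have lev : ∀ n, {t | t ∈ T ∧ s <+: t ∧ t.length = s.length + n}.Countable := by
    intro n
    induction n with
    | zero =>
      apply Set.Countable.mono _ (Set.countable_singleton s)
      rintro t ⟨_, hst, hlen⟩
      have : s = t := hst.eq_of_length (by omega)
      simp [this.symm]
    | succ n ih =>
      have hsub : {t | t ∈ T ∧ s <+: t ∧ t.length = s.length + (n + 1)} ⊆
          ⋃ t ∈ {t | t ∈ T ∧ s <+: t ∧ t.length = s.length + n}, succs T t := by
        rintro t ⟨htT, hst, hlen⟩
        have h1 : t.take (s.length + n) ∈ T := hT t htT _ (List.take_prefix _ _)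
        have h3 : (t.take (s.length + n)).length = s.length + n := by
          simp [hlen]
        have h2 : s <+: t.take (s.length + n) :=
          List.prefix_of_prefix_length_le hst (List.take_prefix _ _) (by omega)
        exact Set.mem_biUnion ⟨h1, h2, h3⟩ ⟨htT, List.take_prefix _ _, by omega⟩
      exact ((Set.Countable.biUnion ih (fun t ht => hc t ht.1 ht.2.1))).mono hsub
  have hext : {t | t ∈ T ∧ s <+: t}.Countable := by
    have hsub : {t | t ∈ T ∧ s <+: t} ⊆
        ⋃ n, {t | t ∈ T ∧ s <+: t ∧ t.length = s.length + n} := by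
      rintro t ⟨htT, hst⟩
      exact Set.mem_iUnion.mpr ⟨t.length - s.length, htT, hst, by
        have := hst.length_le; omega⟩
    exact (Set.countable_iUnion lev).mono hsub
  have hpre : {t : List W1 | t <+: s}.Countable := by
    have hsub : {t : List W1 | t <+: s} ⊆ (fun n => s.take n) '' Set.univ := by
      rintro t ht
      exact ⟨t.length, trivial, (List.prefix_iff_eq_take.mp ht).symm⟩
    exact (Set.countable_univ.image _).mono hsub
  apply Set.Countable.mono _ (hext.union hpre)
  rintro t ⟨htT, hst | hts⟩
  · exact Or.inl ⟨htT, hst⟩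
  · exact Or.inr hts

variable {T : Set (List W1)} {f : List W1 → List W1}

lemma gen_prop (hf : HF T f) (hnil : [] ∈ T) {g : List W1} (hg : Gen T f g) :
    g ∈ T ∧ Cardinal.aleph 1 ≤ Cardinal.mk ↥(succs T g) ∧ f [] <+: g := by
  induction hg with
  | base =>
    obtain ⟨⟨h1, h2, _⟩, _⟩ := hf [] hnil
    exact ⟨h1, h2, List.prefix_rfl⟩
  | step t γ hgt hmem ih =>
    obtain ⟨⟨h1, h2, h3⟩, _⟩ := hf (t ++ [γ]) hmem
    exact ⟨h1, h2, (ih.2.2.trans (List.prefix_append t [γ])).trans h3⟩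

lemma gen_det (hf : HF T f) (hnil : [] ∈ T) :
    ∀ g₁, Gen T f g₁ → ∀ g₂, Gen T f g₂ → ∀ s α β,
      s ++ [α] <+: g₁ → s ++ [β] <+: g₂ → α = β ∨ Gen T f s := by
  intro g₁ hg₁
  induction hg₁ with
  | base =>
    intro g₂ hg₂
    induction hg₂ with
    | base =>
      intro s α β h1 h2
      left
      have hp := List.prefix_of_prefix_length_le h1 h2 (by simp)
      have heq := hp.eq_of_length (by simp)
      simpa using List.append_inj_right heq rfl
    | step u δ hu hmemu ihu =>
      intro s α β h1 h2
      have hus : u <+: f (u ++ [δ]) := (List.prefix_append u [δ]).trans (hf _ hmemu).1.2.2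
      rcases lt_trichotomy s.length u.length with hlt | heq | hgt
      · exact ihu s α β h1 (List.prefix_of_prefix_length_le h2 hus (by simp; omega))
      · right
        have hs2 : s <+: f (u ++ [δ]) := (List.prefix_append s [β]).trans h2
        have hsu : s = u := (List.prefix_of_prefix_length_le hs2 hus (by omega)).eq_of_length heq
        rw [hsu]; exact hu
      · exfalso
        have hfu : (f []).length ≤ u.length := ((gen_prop hf hnil hu).2.2).length_le
        have hsf : (s ++ [α]).length ≤ (f []).length := h1.length_le
        simp at hsf; omega
  | step t γ ht hmemt iht =>
    intro g₂ hg₂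
    have hts : t <+: f (t ++ [γ]) := (List.prefix_append t [γ]).trans (hf _ hmemt).1.2.2
    induction hg₂ with
    | base =>
      intro s α β h1 h2
      rcases lt_trichotomy s.length t.length with hlt | heq | hgt
      · exact iht (f []) Gen.base s α β
          (List.prefix_of_prefix_length_le h1 hts (by simp; omega)) h2
      · right
        have hs1 : s <+: f (t ++ [γ]) := (List.prefix_append s [α]).trans h1
        have hst : s = t := (List.prefix_of_prefix_length_le hs1 hts (by omega)).eq_of_length heq
        rw [hst]; exact ht
      · exfalso
        have hft : (f []).length ≤ t.length := ((gen_prop hf hnil ht).2.2).length_le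
        have hsf : (s ++ [β]).length ≤ (f []).length := h2.length_le
        simp at hsf; omega
    | step u δ hu hmemu ihu =>
      intro s α β h1 h2
      have hus : u <+: f (u ++ [δ]) := (List.prefix_append u [δ]).trans (hf _ hmemu).1.2.2
      rcases lt_trichotomy s.length t.length with hlt | heq | hgt
      · exact iht _ (Gen.step u δ hu hmemu) s α β
          (List.prefix_of_prefix_length_le h1 hts (by simp; omega)) h2
      · right
        have hs1 : s <+: f (t ++ [γ]) := (List.prefix_append s [α]).trans h1
        have hst : s = t := (List.prefix_of_prefix_length_le hs1 hts (by omega)).eq_of_length heq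
        rw [hst]; exact ht
      · rcases lt_trichotomy s.length u.length with hlt' | heq' | hgt'
        · exact ihu s α β h1 (List.prefix_of_prefix_length_le h2 hus (by simp; omega))
        · right
          have hs2 : s <+: f (u ++ [δ]) := (List.prefix_append s [β]).trans h2
          have hsu : s = u := (List.prefix_of_prefix_length_le hs2 hus (by omega)).eq_of_length heq'
          rw [hsu]; exact hu
        · -- s strictly extends both t and u
          have hs1 : s <+: f (t ++ [γ]) := (List.prefix_append s [α]).trans h1
          have hs2 : s <+: f (u ++ [δ]) := (List.prefix_append s [β]).trans h2
          have htγs : t ++ [γ] <+: s :=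
            List.prefix_of_prefix_length_le ((hf _ hmemt).1.2.2) hs1 (by simp; omega)
          have huδs : u ++ [δ] <+: s :=
            List.prefix_of_prefix_length_le ((hf _ hmemu).1.2.2) hs2 (by simp; omega)
          rcases lt_trichotomy t.length u.length with h3 | h3 | h3
          · exfalso
            have hu_s : u <+: s := (List.prefix_append u [δ]).trans huδs
            have htγu : t ++ [γ] <+: u :=
              List.prefix_of_prefix_length_le htγs hu_s (by simp; omega)
            have hgood : GoodExt T (t ++ [γ]) u :=
              ⟨(gen_prop hf hnil hu).1, (gen_prop hf hnil hu).2.1, htγu⟩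
            have hmin := (hf _ hmemt).2 u hgood
            have hlen := hs1.length_le
            omega
          · -- t = u, γ = δ
            left
            have ht_s : t <+: s := (List.prefix_append t [γ]).trans htγs
            have hu_s : u <+: s := (List.prefix_append u [δ]).trans huδs
            have htu : t = u := (List.prefix_of_prefix_length_le ht_s hu_s (by omega)).eq_of_length h3
            have hγδ : t ++ [γ] = u ++ [δ] :=
              (List.prefix_of_prefix_length_le htγs huδs (by simp [htu])).eq_of_length (by simp [htu])
            rw [hγδ] at h1
            have hp := List.prefix_of_prefix_length_le h1 h2 (by simp)
            have heq2 := hp.eq_of_length (by simp)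
            simpa using List.append_inj_right heq2 rfl
          · exfalso
            have ht_s : t <+: s := (List.prefix_append t [γ]).trans htγs
            have huδt : u ++ [δ] <+: t :=
              List.prefix_of_prefix_length_le huδs ht_s (by simp; omega)
            have hgood : GoodExt T (u ++ [δ]) t :=
              ⟨(gen_prop hf hnil ht).1, (gen_prop hf hnil ht).2.1, huδt⟩
            have hmin := (hf _ hmemu).2 t hgood
            have hlen := hs2.length_le
            omega

end Stmt1Aux

/-- every (nonempty) tree all of whose restrictions are uncountable
contains a wide subtree. -/
theorem stmt1 (T : Set (List W1)) (hT : IsTree T) (hne : T.Nonempty)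
    (h : ∀ s ∈ T, ¬ (restr T s).Countable) :
    ∃ S : Set (List W1), Wide S ∧ S ⊆ T := by
  classical
  open Stmt1Aux in
  have hnil : [] ∈ T := by
    obtain ⟨a, ha⟩ := hne
    exact hT a ha [] (List.nil_prefix)
  have hch : ∀ s : List W1, ∃ u, s ∈ T →
      (GoodExt T s u ∧ ∀ v, GoodExt T s v → u.length ≤ v.length) := by
    intro s
    by_cases hs : s ∈ T
    · obtain ⟨u0, hu0⟩ := exists_goodExt hT h hs
      have hPne : {n | ∃ u, GoodExt T s u ∧ u.length = n}.Nonempty := ⟨u0.length, u0, hu0, rfl⟩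
      obtain ⟨u, hu, hulen⟩ := Nat.sInf_mem hPne
      refine ⟨u, fun _ => ⟨hu, fun v hv => ?_⟩⟩
      have hle := Nat.sInf_le (show v.length ∈ {n | ∃ u, GoodExt T s u ∧ u.length = n} from ⟨v, hv, rfl⟩)
      omega
    · exact ⟨[], fun hs' => absurd hs' hs⟩
  choose f hf' using hch
  have hf : HF T f := fun s hs => hf' s hs
  set S : Set (List W1) := {s | ∃ g, Gen T f g ∧ s <+: g} with hSdef
  have hGenS : ∀ g, Gen T f g → g ∈ S := fun g hg => ⟨g, hg, List.prefix_rfl⟩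
  have hST : S ⊆ T := by
    rintro s ⟨g, hg, hsg⟩
    exact hT g (gen_prop hf hnil hg).1 s hsg
  have hsucc : ∀ g, Gen T f g → succs S g = succs T g := by
    intro g hg
    ext r
    constructor
    · rintro ⟨hrS, hgr, hlen⟩
      exact ⟨hST hrS, hgr, hlen⟩
    · rintro ⟨hrT, hgr, hlen⟩
      obtain ⟨x, hx⟩ := succs_shape ⟨hrT, hgr, hlen⟩
      subst hx
      exact ⟨⟨f (g ++ [x]), Gen.step g x hg hrT, (hf _ hrT).1.2.2⟩, hgr, hlen⟩
  have hcard : ∀ g, Gen T f g → Cardinal.mk ↥(succs S g) = Cardinal.aleph 1 := by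
    intro g hg
    rw [hsucc g hg]
    exact le_antisymm succs_le (gen_prop hf hnil hg).2.1
  have h2le : (2 : Cardinal) ≤ Cardinal.aleph 1 := by
    have h1 : (2 : Cardinal) < Cardinal.aleph0 := by exact_mod_cast Cardinal.nat_lt_aleph0 2
    exact h1.le.trans (Cardinal.aleph0_le_aleph 1)
  have hBN : ∀ g, Gen T f g → g ∈ BN S := by
    intro g hg
    exact ⟨hGenS g hg, le_of_le_of_eq h2le (hcard g hg).symm⟩
  refine ⟨S, ⟨⟨f [], hGenS _ Gen.base⟩, ?_, ?_, ?_⟩, hST⟩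
  · rintro s ⟨g, hg, hsg⟩ t hts
    exact ⟨g, hg, hts.trans hsg⟩
  · rintro s ⟨g, hg, hsg⟩
    exact ⟨g, hBN g hg, hsg⟩
  · intro s hs
    obtain ⟨hsS, hs2⟩ := hs
    obtain ⟨r₁, r₂, hne12⟩ := Cardinal.two_le_iff.mp hs2
    obtain ⟨α, hα⟩ := succs_shape r₁.2
    obtain ⟨β, hβ⟩ := succs_shape r₂.2
    have hαβ : α ≠ β := by
      intro hco
      exact hne12 (Subtype.ext (by rw [hα, hβ, hco]))
    have h1 : (r₁ : List W1) ∈ S := r₁.2.1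
    have h2 : (r₂ : List W1) ∈ S := r₂.2.1
    obtain ⟨g₁, hg₁, hpre₁⟩ := h1
    obtain ⟨g₂, hg₂, hpre₂⟩ := h2
    rw [hα] at hpre₁
    rw [hβ] at hpre₂
    rcases gen_det hf hnil g₁ hg₁ g₂ hg₂ s α β hpre₁ hpre₂ with hab | hGs
    · exact absurd hab hαβ
    · exact hcard s hGs
end
end

section
/- Let T be a wide tree and n < ω. Suppose for every u ∈ BN_n(T) a wide tree T_u ⊆ T↾_u is given. Then S = ⋃_{u ∈ BN_n(T)} T_u is a wide tree satisfying S ⊆_n T and S↾_u = T_u for all u ∈ BN_n(T). -/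
noncomputable section

lemma lt_length {u s : List W1} (h : u <+: s) (hne : u ≠ s) : u.length < s.length :=
  lt_of_le_of_ne h.length_le (fun hl => hne (List.IsPrefix.eq_of_length h hl))

lemma finite_prefixes (s : List W1) : {u : List W1 | u <+: s}.Finite := by
  apply Set.Finite.subset ((Set.finite_Iic s.length).image (fun k => s.take k))
  intro u hu
  exact ⟨u.length, by simpa using List.IsPrefix.length_le hu,
    (List.prefix_iff_eq_take.mp hu).symm⟩

lemma belowBN_fin (T : Set (List W1)) (s : List W1) : (belowBN T s).Finite :=
  (finite_prefixes s).subset (fun u hu => hu.2.1)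

lemma succs_nonempty {T : Set (List W1)} {s : List W1} (hs : s ∈ BN T) :
    (succs T s).Nonempty := by
  rw [← Set.nonempty_coe_sort, ← Cardinal.mk_ne_zero_iff]
  intro h
  have h2 := hs.2
  rw [h] at h2
  simp at h2

lemma lemM {T : Set (List W1)} (hT : Wide T) (s : List W1) (hs : s ∈ T) :
    ∃ v ∈ BN T, s <+: v ∧ belowBN T v = belowBN T s := by
  obtain ⟨w, hw, hsw⟩ := hT.2.2.1 s hs
  set D := {u | u ∈ BN T ∧ s <+: u ∧ u <+: w} with hDdef
  have hDfin : D.Finite := (finite_prefixes w).subset fun u hu => hu.2.2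
  have hDne : D.Nonempty := ⟨w, hw, hsw, List.prefix_refl w⟩
  obtain ⟨v, hvD, hmin⟩ := Set.exists_min_image D List.length hDfin hDne
  refine ⟨v, hvD.1, hvD.2.1, ?_⟩
  ext u
  constructor
  · rintro ⟨huBN, huv, hne⟩
    have hlen : u.length < v.length := lt_length huv hne
    rcases List.prefix_or_prefix_of_prefix huv hvD.2.1 with hus | hsu
    · refine ⟨huBN, hus, ?_⟩
      rintro rfl
      have := hmin u ⟨huBN, hus, huv.trans hvD.2.2⟩
      omega
    · have : u ∈ D := ⟨huBN, hsu, huv.trans hvD.2.2⟩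
      have := hmin u this
      omega
  · rintro ⟨huBN, hus, hne⟩
    refine ⟨huBN, hus.trans hvD.2.1, ?_⟩
    rintro rfl
    exact hne (List.IsPrefix.eq_of_length hus
      (le_antisymm hus.length_le hvD.2.1.length_le))

lemma lemE {T : Set (List W1)} (hT : Wide T) (n : ℕ) :
    ∀ k, ∀ s ∈ T, (belowBN T s).ncard + k = n → ∃ v ∈ BNn T n, s <+: v := by
  intro k
  induction k with
  | zero =>
    intro s hs hc
    obtain ⟨v, hv, hsv, hbe⟩ := lemM hT s hs
    exact ⟨v, ⟨hv, by rw [hbe]; exact ⟨belowBN_fin T s, by omega⟩⟩, hsv⟩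
  | succ k ih =>
    intro s hs hc
    obtain ⟨v, hv, hsv, hbe⟩ := lemM hT s hs
    obtain ⟨t1, ht1⟩ := succs_nonempty hv
    have hvt1 : v <+: t1 := ht1.2.1
    have hlen : t1.length = v.length + 1 := ht1.2.2
    have hb : belowBN T t1 = insert v (belowBN T v) := by
      ext u
      constructor
      · rintro ⟨h1, h2, h3⟩
        have hul : u.length < t1.length := lt_length h2 h3
        have huv : u <+: v := List.prefix_of_prefix_length_le h2 hvt1 (by omega)
        by_cases he : u = v
        · exact Or.inl he
        · exact Or.inr ⟨h1, huv, he⟩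
      · rintro (rfl | ⟨h1, h2, h3⟩)
        · exact ⟨hv, hvt1, fun he => by rw [he] at hlen; omega⟩
        · refine ⟨h1, h2.trans hvt1, fun he => ?_⟩
          have := lt_length h2 h3
          rw [he] at this
          omega
    have hvnot : v ∉ belowBN T v := fun h => h.2.2 rfl
    have hc1 : (belowBN T t1).ncard + k = n := by
      rw [hb, Set.ncard_insert_of_notMem hvnot (belowBN_fin T v), hbe]
      omega
    obtain ⟨w, hw, htw⟩ := ih t1 ht1.1 hc1
    exact ⟨w, hw, (hsv.trans hvt1).trans htw⟩

lemma lemE' {T : Set (List W1)} (hT : Wide T) {n : ℕ} {s : List W1} (hs : s ∈ T)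
    (h : (belowBN T s).ncard ≤ n) : ∃ v ∈ BNn T n, s <+: v :=
  lemE hT n (n - (belowBN T s).ncard) s hs (by omega)

lemma lemI {T : Set (List W1)} {n : ℕ} {u v : List W1} (hu : u ∈ BNn T n)
    (hv : v ∈ BNn T n) (h : u <+: v) : u = v := by
  by_contra hne
  have hsub : belowBN T u ⊆ belowBN T v := by
    rintro x ⟨h1, h2, h3⟩
    refine ⟨h1, h2.trans h, ?_⟩
    rintro rfl
    exact hne (List.IsPrefix.eq_of_length h (le_antisymm h.length_le h2.length_le))
  have hlt : (belowBN T u).ncard < (belowBN T v).ncard := by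
    refine Set.ncard_lt_ncard ?_ hv.2.1
    rw [Set.ssubset_iff_of_subset hsub]
    exact ⟨u, ⟨hu.1, h, hne⟩, fun hm => hm.2.2 rfl⟩
  have h1 := hu.2.2
  have h2 := hv.2.2
  omega

lemma lemU {T Tv : Set (List W1)} {u : List W1} (hW : Wide Tv) (hS : Tv ⊆ restr T u) :
    u ∈ Tv ∧ ∀ s ∈ BN Tv, u <+: s := by
  have key : ∀ s ∈ BN Tv, u <+: s := by
    intro s hsB
    rcases (hS hsB.1).2 with h | h
    · exact h
    · by_cases he : s = u
      · rw [he]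
      · exfalso
        have hl2 : s.length < u.length := lt_length h he
        have hsub : succs Tv s ⊆ {u.take (s.length + 1)} := by
          rintro t ⟨ht, hst, hlen⟩
          have htu : t <+: u := by
            rcases (hS ht).2 with h2 | h2
            · have : t = u := (List.IsPrefix.eq_of_length h2
                (le_antisymm h2.length_le (by omega))).symm
              rw [this]
            · exact h2
          have : t = u.take t.length := List.prefix_iff_eq_take.mp htu
          rw [Set.mem_singleton_iff, this, hlen]
        have hle : Cardinal.mk ↥(succs Tv s) ≤ 1 :=
          (Cardinal.mk_le_mk_of_subset hsub).trans_eq (Cardinal.mk_singleton _)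
        have := hsB.2.trans hle
        norm_num at this
  obtain ⟨x, hx⟩ := hW.1
  obtain ⟨s, hsB, _⟩ := hW.2.2.1 x hx
  exact ⟨hW.2.1 s hsB.1 u (key s hsB), key⟩

/-- gluing wide trees over `BN_n(T)` yields a wide tree `S ⊆_n T`
with `S↾_u = T_u`. -/
theorem stmt4 (T : Set (List W1)) (hT : Wide T) (n : ℕ)
    (Tu : List W1 → Set (List W1))
    (hWide : ∀ u ∈ BNn T n, Wide (Tu u))
    (hSub : ∀ u ∈ BNn T n, Tu u ⊆ restr T u) :
    Wide (⋃ u ∈ BNn T n, Tu u) ∧ SubN (⋃ u ∈ BNn T n, Tu u) T n ∧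
      ∀ u ∈ BNn T n, restr (⋃ u ∈ BNn T n, Tu u) u = Tu u := by
  set S := ⋃ u ∈ BNn T n, Tu u with hSdef
  have hmemS : ∀ {t : List W1}, t ∈ S ↔ ∃ u ∈ BNn T n, t ∈ Tu u := by
    intro t; simp [hSdef]
  have hSsubT : S ⊆ T := by
    intro t ht
    obtain ⟨u, hu, htu⟩ := hmemS.mp ht
    exact (hSub u hu htu).1
  have hUin : ∀ u ∈ BNn T n, u ∈ Tu u := fun u hu => (lemU (hWide u hu) (hSub u hu)).1
  have hUbn : ∀ u ∈ BNn T n, ∀ s ∈ BN (Tu u), u <+: s :=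
    fun u hu => (lemU (hWide u hu) (hSub u hu)).2
  have hD : ∀ u ∈ BNn T n, ∀ v ∈ BNn T n, ∀ t, u <+: t → t ∈ Tu v → u = v := by
    intro u hu v hv t hut htv
    rcases (hSub v hv htv).2 with hvt | htv'
    · rcases List.prefix_or_prefix_of_prefix hut hvt with h | h
      · exact lemI hu hv h
      · exact (lemI hv hu h).symm
    · exact lemI hu hv (hut.trans htv')
  have hS1 : ∀ u ∈ BNn T n, ∀ t, u <+: t → succs S t = succs (Tu u) t := by
    intro u hu t hut
    ext t'
    constructor
    · rintro ⟨ht'S, htt', hlen⟩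
      obtain ⟨v, hv, ht'v⟩ := hmemS.mp ht'S
      rcases hD u hu v hv t' (hut.trans htt') ht'v with rfl
      exact ⟨ht'v, htt', hlen⟩
    · rintro ⟨ht', htt', hlen⟩
      exact ⟨hmemS.mpr ⟨u, hu, ht'⟩, htt', hlen⟩
  have hTreeS : IsTree S := by
    intro s hsS t hts
    obtain ⟨u, hu, hsu⟩ := hmemS.mp hsS
    exact hmemS.mpr ⟨u, hu, (hWide u hu).2.1 s hsu t hts⟩
  have hBNTu : ∀ u ∈ BNn T n, ∀ s ∈ BN (Tu u), s ∈ BN S := by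
    intro u hu s hs
    refine ⟨hmemS.mpr ⟨u, hu, hs.1⟩, ?_⟩
    rw [hS1 u hu s (hUbn u hu s hs)]
    exact hs.2
  have hExt : ∀ t ∈ S, ∃ s ∈ BN S, t <+: s := by
    intro t ht
    obtain ⟨u, hu, htu⟩ := hmemS.mp ht
    rcases (hSub u hu htu).2 with hut | htu'
    · obtain ⟨s, hs, hts⟩ := (hWide u hu).2.2.1 t htu
      exact ⟨s, hBNTu u hu s hs, hts⟩
    · obtain ⟨s, hs, hus⟩ := (hWide u hu).2.2.1 u (hUin u hu)
      exact ⟨s, hBNTu u hu s hs, htu'.trans hus⟩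
  have hCard : ∀ s ∈ BN S, Cardinal.mk ↥(succs S s) = Cardinal.aleph 1 := by
    intro s hs
    obtain ⟨v, hv, hsv⟩ := hmemS.mp hs.1
    have hcase : v <+: s ∨ (s <+: v ∧ s ≠ v) := by
      rcases (hSub v hv hsv).2 with h | h
      · exact Or.inl h
      · by_cases he : s = v
        · exact Or.inl (he ▸ List.prefix_refl s)
        · exact Or.inr ⟨h, he⟩
    rcases hcase with hvs | ⟨hsv', hse⟩
    · rw [hS1 v hv s hvs]
      refine (hWide v hv).2.2.2 s ⟨hsv, ?_⟩
      rw [← hS1 v hv s hvs]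
      exact hs.2
    · have hslen : s.length < v.length := lt_length hsv' hse
      have hkey : succs S s = succs T s := by
        ext t'
        constructor
        · rintro ⟨h1, h2, h3⟩
          exact ⟨hSsubT h1, h2, h3⟩
        · rintro ⟨h1, h2, h3⟩
          have hsubb : belowBN T t' ⊆ belowBN T v := by
            rintro x ⟨hx1, hx2, hx3⟩
            have hxlen : x.length < t'.length := lt_length hx2 hx3
            have hxs : x <+: s := List.prefix_of_prefix_length_le hx2 h2 (by omega)
            refine ⟨hx1, hxs.trans hsv', ?_⟩
            rintro rfl
            have := hxs.length_le
            omega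
          have hle : (belowBN T t').ncard ≤ n := by
            calc (belowBN T t').ncard ≤ (belowBN T v).ncard :=
                  Set.ncard_le_ncard hsubb hv.2.1
              _ = n := hv.2.2
          obtain ⟨w, hw, ht'w⟩ := lemE' hT h1 hle
          refine ⟨hmemS.mpr ⟨w, hw, ?_⟩, h2, h3⟩
          exact (hWide w hw).2.1 w (hUin w hw) t' ht'w
      rw [hkey]
      refine hT.2.2.2 s ⟨hSsubT hs.1, ?_⟩
      rw [← hkey]
      exact hs.2
  have hnil : ([] : List W1) ∈ T := by
    obtain ⟨x, hx⟩ := hT.1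
    exact hT.2.1 x hx [] List.nil_prefix
  have hbe : belowBN T ([] : List W1) = ∅ := by
    ext u
    simp only [Set.mem_empty_iff_false, iff_false]
    rintro ⟨_, h2, h3⟩
    exact h3 (List.prefix_nil.mp h2)
  obtain ⟨v0, hv0, _⟩ := lemE' hT (n := n) hnil (by rw [hbe]; simp)
  have hSne : S.Nonempty := ⟨v0, hmemS.mpr ⟨v0, hv0, hUin v0 hv0⟩⟩
  refine ⟨⟨hSne, hTreeS, hExt, hCard⟩,
    ⟨fun u hu => hmemS.mpr ⟨u, hu, hUin u hu⟩, hSsubT⟩, ?_⟩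
  intro u hu
  ext t
  constructor
  · rintro ⟨htS, hcomp⟩
    obtain ⟨v, hv, htv⟩ := hmemS.mp htS
    rcases hcomp with hut | htu
    · rcases hD u hu v hv t hut htv with rfl
      exact htv
    · exact (hWide u hu).2.1 u (hUin u hu) t htu
  · intro htu
    exact ⟨hmemS.mpr ⟨u, hu, htu⟩, (hSub u hu htu).2⟩
end
end

section
/- Let P be a WT-forcing (a nonempty set of wide trees closed under restrictions T ↦ T↾_u), and for each n < ω let D_n ⊆ P be pre-dense in P. Then for any S₀ ∈ P there is a wide tree T ⊆ S₀ (not necessarily in P) such that for every n, every s ∈ BN_n(T) satisfies T↾ₛ ⊆ S for some S ∈ D_n. -/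
noncomputable section

/-- A WT-forcing: a nonempty set of wide trees closed under restrictions. -/
def WTForcing (P : Set (Set (List W1))) : Prop :=
  P.Nonempty ∧ (∀ T ∈ P, Wide T) ∧ ∀ T ∈ P, ∀ u ∈ T, restr T u ∈ P

/-- `D` is dense in `P`: every member of `P` has a subtree in `D`. -/
def DenseIn (D P : Set (Set (List W1))) : Prop := ∀ S ∈ P, ∃ T ∈ D, T ⊆ S

/-- `D` is pre-dense in `P`: the set of conditions below some element of `D`
is dense in `P`. -/
def PreDenseIn (D P : Set (Set (List W1))) : Prop :=
  DenseIn {S | S ∈ P ∧ ∃ T ∈ D, S ⊆ T} P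
namespace Stmt6

attribute [local instance] Classical.propDecidable

/-- helper: two prefixes of the same list with equal lengths are equal -/
lemma pref_eq {a b c : List W1} (h1 : a <+: c) (h2 : b <+: c) (h : a.length = b.length) :
    a = b :=
  (List.prefix_of_prefix_length_le h1 h2 h.le).eq_of_length h

lemma two_le_aleph1 : (2 : Cardinal) ≤ Cardinal.aleph 1 :=
  le_trans ((Cardinal.nat_lt_aleph0 2).le.trans_eq (by norm_num)) (Cardinal.aleph0_le_aleph 1)

lemma mk_W1 : Cardinal.mk W1 = Cardinal.aleph 1 := Cardinal.mk_ord_toType _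

structure Node where
  Tt : Set (List W1)
  nd : List W1

def eFun (p : Node) : W1 → List W1 :=
  if h : Nonempty (W1 ≃ ↥(succs p.Tt p.nd)) then fun α => (h.some α : List W1) else fun _ => []

lemma eFun_spec (p : Node) (h : Cardinal.mk ↥(succs p.Tt p.nd) = Cardinal.aleph 1) :
    (∀ α, eFun p α ∈ succs p.Tt p.nd) ∧ Function.Injective (eFun p) ∧
      ∀ x ∈ succs p.Tt p.nd, ∃ α, eFun p α = x := by
  have hne : Nonempty (W1 ≃ ↥(succs p.Tt p.nd)) :=
    Cardinal.eq.mp (mk_W1.trans h.symm)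
  unfold eFun
  rw [dif_pos hne]
  refine ⟨fun α => (hne.some α).2, fun a b hab => hne.some.injective (Subtype.ext hab),
    fun x hx => ⟨hne.some.symm ⟨x, hx⟩, by simp⟩⟩

def Good (P : Set (Set (List W1))) (D : ℕ → Set (Set (List W1))) (n : ℕ) (p q : Node)
    (α : W1) : Prop :=
  q.Tt ∈ P ∧ q.Tt ⊆ restr p.Tt (eFun p α) ∧ q.nd ∈ BN q.Tt ∧ eFun p α <+: q.nd ∧
    ∃ U ∈ D n, q.Tt ⊆ U

def GoodBase (P : Set (Set (List W1))) (D : ℕ → Set (Set (List W1))) (S₀ : Set (List W1))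
    (q : Node) : Prop :=
  q.Tt ∈ P ∧ q.Tt ⊆ S₀ ∧ q.nd ∈ BN q.Tt ∧ ∃ U ∈ D 0, q.Tt ⊆ U

def step (P : Set (Set (List W1))) (D : ℕ → Set (Set (List W1))) (n : ℕ) (p : Node)
    (α : W1) : Node :=
  if h : ∃ q, Good P D n p q α then h.choose else p

def base (P : Set (Set (List W1))) (D : ℕ → Set (Set (List W1))) (S₀ : Set (List W1)) : Node :=
  if h : ∃ q, GoodBase P D S₀ q then h.choose else ⟨∅, []⟩

def F (P : Set (Set (List W1))) (D : ℕ → Set (Set (List W1))) (S₀ : Set (List W1)) :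
    List W1 → Node
  | [] => base P D S₀
  | α :: σ => step P D (σ.length + 1) (F P D S₀ σ) α

variable {P : Set (Set (List W1))} {D : ℕ → Set (Set (List W1))} {S₀ : Set (List W1)}
variable (hP : WTForcing P) (hD : ∀ n, D n ⊆ P ∧ PreDenseIn (D n) P) (hS₀ : S₀ ∈ P)

section
include hP hD

/-- Given a condition S' contained in `restr Tc t` for a node t, every branching node of S'
extends t (when it is at least as long), in particular any branching node works. -/
lemma bn_ext {Tc S' : Set (List W1)} {t sn : List W1} (hS'P : S' ∈ P)
    (hsub : S' ⊆ restr Tc t) (hsn : sn ∈ BN S') : t <+: sn := by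
  have hcomp : ∀ x ∈ S', t <+: x ∨ x <+: t := fun x hx => (hsub hx).2
  rcases hcomp sn hsn.1 with h | h
  · exact h
  · -- sn <+: t
    rcases eq_or_lt_of_le h.length_le with hlen | hlen
    · exact (h.eq_of_length hlen) ▸ List.prefix_rfl
    · -- sn is a proper prefix of t; derive a contradiction from two distinct successors
      exfalso
      obtain ⟨x, y, hxy⟩ := Cardinal.two_le_iff.mp hsn.2
      have hx : (x : List W1) <+: t := by
        rcases hcomp x x.2.1 with h' | h'
        · have hxlen : (x : List W1).length = sn.length + 1 := x.2.2.2
          have ht : t = (x : List W1) := h'.eq_of_length (by have := h'.length_le; omega)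
          exact ht ▸ List.prefix_rfl
        · exact h'
      have hy : (y : List W1) <+: t := by
        rcases hcomp y y.2.1 with h' | h'
        · have hylen : (y : List W1).length = sn.length + 1 := y.2.2.2
          have ht : t = (y : List W1) := h'.eq_of_length (by have := h'.length_le; omega)
          exact ht ▸ List.prefix_rfl
        · exact h'
      have hxl : (x : List W1).length = sn.length + 1 := x.2.2.2
      have hyl : (y : List W1).length = sn.length + 1 := y.2.2.2
      exact hxy (Subtype.ext (pref_eq hx hy (by omega)))

lemma exists_good {n : ℕ} {p : Node} (hpP : p.Tt ∈ P) (hpBN : p.nd ∈ BN p.Tt) (α : W1) :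
    ∃ q, Good P D n p q α := by
  have hwide : Wide p.Tt := hP.2.1 _ hpP
  have hmk : Cardinal.mk ↥(succs p.Tt p.nd) = Cardinal.aleph 1 := hwide.2.2.2 _ hpBN
  have hes := eFun_spec p hmk
  have htmem : eFun p α ∈ p.Tt := (hes.1 α).1
  have hrP : restr p.Tt (eFun p α) ∈ P := hP.2.2 _ hpP _ htmem
  obtain ⟨S', hS', hsub⟩ := (hD n).2 _ hrP
  obtain ⟨hS'P, U, hU, hS'U⟩ := hS'
  have hwS' : Wide S' := hP.2.1 _ hS'P
  obtain ⟨x, hx⟩ := hwS'.1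
  obtain ⟨sn, hsn, _⟩ := hwS'.2.2.1 x hx
  exact ⟨⟨S', sn⟩, hS'P, hsub, hsn, bn_ext hP hD hS'P hsub hsn, U, hU, hS'U⟩

include hS₀ in
lemma exists_base : ∃ q, GoodBase P D S₀ q := by
  obtain ⟨S', hS', hsub⟩ := (hD 0).2 _ hS₀
  obtain ⟨hS'P, U, hU, hS'U⟩ := hS'
  have hwS' : Wide S' := hP.2.1 _ hS'P
  obtain ⟨x, hx⟩ := hwS'.1
  obtain ⟨sn, hsn, _⟩ := hwS'.2.2.1 x hx
  exact ⟨⟨S', sn⟩, hS'P, hsub, hsn, U, hU, hS'U⟩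

include hS₀ in
lemma F_spec : ∀ σ : List W1, (F P D S₀ σ).Tt ∈ P ∧ (F P D S₀ σ).nd ∈ BN (F P D S₀ σ).Tt ∧
    (∃ U ∈ D σ.length, (F P D S₀ σ).Tt ⊆ U) ∧ (F P D S₀ σ).Tt ⊆ S₀ := by
  intro σ
  induction σ with
  | nil =>
    have hex := exists_base hP hD hS₀
    simp only [F, base, dif_pos hex]
    obtain ⟨h1, h2, h3, h4⟩ := hex.choose_spec
    exact ⟨h1, h3, h4, h2⟩
  | cons α σ ih =>
    have hex := exists_good hP hD (n := σ.length + 1) ih.1 ih.2.1 α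
    simp only [F, step, dif_pos hex]
    obtain ⟨h1, h2, h3, h4, h5⟩ := hex.choose_spec
    refine ⟨h1, h3, by simpa using h5, fun t ht => ih.2.2.2 (h2 ht).1⟩

include hS₀ in
lemma F_step (σ : List W1) (α : W1) :
    Good P D (σ.length + 1) (F P D S₀ σ) (F P D S₀ (α :: σ)) α := by
  have hex := exists_good hP hD (n := σ.length + 1) (F_spec hP hD hS₀ σ).1
    (F_spec hP hD hS₀ σ).2.1 α
  simp only [F, step, dif_pos hex]
  exact hex.choose_spec

end

section
include hP hD hS₀

lemma TT_tree (σ : List W1) : IsTree (F P D S₀ σ).Tt :=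
  (hP.2.1 _ (F_spec hP hD hS₀ σ).1).2.1

lemma ss_mem (σ : List W1) : (F P D S₀ σ).nd ∈ (F P D S₀ σ).Tt :=
  (F_spec hP hD hS₀ σ).2.1.1

lemma mk_succs (σ : List W1) :
    Cardinal.mk ↥(succs (F P D S₀ σ).Tt (F P D S₀ σ).nd) = Cardinal.aleph 1 :=
  (hP.2.1 _ (F_spec hP hD hS₀ σ).1).2.2.2 _ (F_spec hP hD hS₀ σ).2.1

lemma e_mem (σ : List W1) (α : W1) :
    eFun (F P D S₀ σ) α ∈ succs (F P D S₀ σ).Tt (F P D S₀ σ).nd :=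
  (eFun_spec _ (mk_succs hP hD hS₀ σ)).1 α

lemma e_inj (σ : List W1) : Function.Injective (eFun (F P D S₀ σ)) :=
  (eFun_spec _ (mk_succs hP hD hS₀ σ)).2.1

lemma ss_pref_e (σ : List W1) (α : W1) : (F P D S₀ σ).nd <+: eFun (F P D S₀ σ) α :=
  (e_mem hP hD hS₀ σ α).2.1

lemma e_len (σ : List W1) (α : W1) :
    (eFun (F P D S₀ σ) α).length = (F P D S₀ σ).nd.length + 1 :=
  (e_mem hP hD hS₀ σ α).2.2

lemma e_pref_ss (σ : List W1) (α : W1) : eFun (F P D S₀ σ) α <+: (F P D S₀ (α :: σ)).nd :=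
  (F_step hP hD hS₀ σ α).2.2.2.1

lemma ss_pref_cons (σ : List W1) (α : W1) : (F P D S₀ σ).nd <+: (F P D S₀ (α :: σ)).nd :=
  (ss_pref_e hP hD hS₀ σ α).trans (e_pref_ss hP hD hS₀ σ α)

lemma ss_len_cons (σ : List W1) (α : W1) :
    (F P D S₀ σ).nd.length < (F P D S₀ (α :: σ)).nd.length := by
  have h1 := e_len hP hD hS₀ σ α
  have h2 := (e_pref_ss hP hD hS₀ σ α).length_le
  omega

lemma ss_pref_append (τ σ : List W1) : (F P D S₀ σ).nd <+: (F P D S₀ (τ ++ σ)).nd := by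
  induction τ with
  | nil => exact List.prefix_rfl
  | cons β τ ih => exact ih.trans (ss_pref_cons hP hD hS₀ (τ ++ σ) β)

lemma e_pref_append (τ σ : List W1) (α : W1) :
    eFun (F P D S₀ σ) α <+: (F P D S₀ (τ ++ α :: σ)).nd :=
  (e_pref_ss hP hD hS₀ σ α).trans (ss_pref_append hP hD hS₀ τ (α :: σ))

lemma suffix_of_pref : ∀ σ σ' : List W1, (F P D S₀ σ).nd <+: (F P D S₀ σ').nd → σ <:+ σ' := by
  intro σ
  induction σ with
  | nil => exact fun σ' _ => List.nil_suffix
  | cons α ρ ih =>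
    intro σ' h
    have h1 : (F P D S₀ ρ).nd <+: (F P D S₀ σ').nd :=
      (ss_pref_cons hP hD hS₀ ρ α).trans h
    obtain ⟨τ, rfl⟩ := ih σ' h1
    rcases τ.eq_nil_or_concat with rfl | ⟨τ₁, β, rfl⟩
    · exfalso
      rw [List.nil_append] at h
      have := h.length_le
      have := ss_len_cons hP hD hS₀ ρ α
      omega
    · simp only [List.concat_eq_append, List.append_assoc, List.singleton_append] at h ⊢
      have he1 : eFun (F P D S₀ ρ) β <+: (F P D S₀ (τ₁ ++ β :: ρ)).nd :=
        e_pref_append hP hD hS₀ τ₁ ρ β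
      have he2 : eFun (F P D S₀ ρ) α <+: (F P D S₀ (τ₁ ++ β :: ρ)).nd :=
        (e_pref_ss hP hD hS₀ ρ α).trans h
      have : eFun (F P D S₀ ρ) α = eFun (F P D S₀ ρ) β :=
        pref_eq he2 he1 (by rw [e_len hP hD hS₀ ρ α, e_len hP hD hS₀ ρ β])
      have hab : α = β := e_inj hP hD hS₀ ρ this
      subst hab
      exact List.suffix_append τ₁ (α :: ρ)

lemma ss_inj : ∀ σ σ' : List W1, (F P D S₀ σ).nd = (F P D S₀ σ').nd → σ = σ' := by
  intro σ σ' h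
  obtain ⟨τ, rfl⟩ := suffix_of_pref hP hD hS₀ σ σ' (h ▸ List.prefix_rfl)
  obtain ⟨τ', hτ'⟩ := suffix_of_pref hP hD hS₀ (τ ++ σ) σ (h ▸ List.prefix_rfl)
  have : τ'.length + (τ.length + σ.length) = σ.length := by
    have := congrArg List.length hτ'
    simpa [add_assoc] using this
  have hτ : τ = [] := List.eq_nil_of_length_eq_zero (by omega)
  rw [hτ, List.nil_append]

end

def Tlim (P : Set (Set (List W1))) (D : ℕ → Set (Set (List W1))) (S₀ : Set (List W1)) :
    Set (List W1) :=
  {t | ∃ σ, t <+: (F P D S₀ σ).nd}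

section
include hP hD hS₀

lemma tree_Tlim : IsTree (Tlim P D S₀) := by
  rintro s ⟨σ, hσ⟩ t ht
  exact ⟨σ, ht.trans hσ⟩

lemma Tlim_sub : Tlim P D S₀ ⊆ S₀ := by
  rintro t ⟨σ, hσ⟩
  exact (F_spec hP hD hS₀ σ).2.2.2 (TT_tree hP hD hS₀ σ _ (ss_mem hP hD hS₀ σ) _ hσ)

lemma ss_mem_Tlim (σ : List W1) : (F P D S₀ σ).nd ∈ Tlim P D S₀ := ⟨σ, List.prefix_rfl⟩

lemma succs_Tlim (σ : List W1) :
    succs (Tlim P D S₀) (F P D S₀ σ).nd = Set.range (eFun (F P D S₀ σ)) := by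
  ext t
  constructor
  · rintro ⟨⟨σ', hσ'⟩, hpre, hlen⟩
    have hss : (F P D S₀ σ).nd <+: (F P D S₀ σ').nd := hpre.trans hσ'
    obtain ⟨τ, rfl⟩ := suffix_of_pref hP hD hS₀ σ σ' hss
    rcases τ.eq_nil_or_concat with rfl | ⟨τ₁, β, rfl⟩
    · exfalso
      rw [List.nil_append] at hσ'
      have := hσ'.length_le
      omega
    · simp only [List.concat_eq_append, List.append_assoc, List.singleton_append] at hσ'
      have he : eFun (F P D S₀ σ) β <+: (F P D S₀ (τ₁ ++ β :: σ)).nd :=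
        e_pref_append hP hD hS₀ τ₁ σ β
      have : t = eFun (F P D S₀ σ) β :=
        pref_eq hσ' he (by rw [e_len hP hD hS₀ σ β, hlen])
      exact ⟨β, this.symm⟩
  · rintro ⟨α, rfl⟩
    exact ⟨⟨α :: σ, e_pref_ss hP hD hS₀ σ α⟩, ss_pref_e hP hD hS₀ σ α,
      e_len hP hD hS₀ σ α⟩

lemma mk_succs_Tlim (σ : List W1) :
    Cardinal.mk ↥(succs (Tlim P D S₀) (F P D S₀ σ).nd) = Cardinal.aleph 1 := by
  rw [succs_Tlim hP hD hS₀ σ, Cardinal.mk_range_eq _ (e_inj hP hD hS₀ σ), mk_W1]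

lemma ss_BN_Tlim (σ : List W1) : (F P D S₀ σ).nd ∈ BN (Tlim P D S₀) :=
  ⟨ss_mem_Tlim hP hD hS₀ σ, by rw [mk_succs_Tlim hP hD hS₀ σ]; exact two_le_aleph1⟩

lemma locate : ∀ (σu t u : List W1), (∀ ρ, t ≠ (F P D S₀ ρ).nd) → t <+: u →
    u.length = t.length + 1 → u <+: (F P D S₀ σu).nd →
    (u <+: (F P D S₀ ([] : List W1)).nd ∧ t <+: (F P D S₀ ([] : List W1)).nd) ∨
      ∃ α ρ₀, u <+: (F P D S₀ (α :: ρ₀)).nd ∧ (F P D S₀ ρ₀).nd <+: t ∧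
        (F P D S₀ ρ₀).nd ≠ t ∧ eFun (F P D S₀ ρ₀) α <+: t := by
  intro σu
  induction σu with
  | nil => exact fun t u hns htu hlen hu => Or.inl ⟨hu, htu.trans hu⟩
  | cons α ρ₀ ih =>
    intro t u hns htu hlen hu
    by_cases hcase : u <+: (F P D S₀ ρ₀).nd
    · exact ih t u hns htu hlen hcase
    · right
      refine ⟨α, ρ₀, hu, ?_⟩
      have hssρ : (F P D S₀ ρ₀).nd <+: u := by
        rcases le_or_gt u.length (F P D S₀ ρ₀).nd.length with hl | hl
        · exact absurd (List.prefix_of_prefix_length_le hu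
            (ss_pref_cons hP hD hS₀ ρ₀ α) hl) hcase
        · exact List.prefix_of_prefix_length_le (ss_pref_cons hP hD hS₀ ρ₀ α) hu hl.le
      have hlρ : (F P D S₀ ρ₀).nd.length < u.length := by
        rcases lt_or_eq_of_le hssρ.length_le with hl | hl
        · exact hl
        · exact absurd (hssρ.eq_of_length hl) (fun h => hcase (h ▸ List.prefix_rfl))
      have hlt : (F P D S₀ ρ₀).nd.length < t.length := by
        rcases lt_or_eq_of_le (show (F P D S₀ ρ₀).nd.length ≤ t.length by omega) with hl | hl
        · exact hl
        · exact absurd (pref_eq hssρ htu hl).symm (hns ρ₀)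
      have hsst : (F P D S₀ ρ₀).nd <+: t :=
        List.prefix_of_prefix_length_le hssρ htu hlt.le
      have heu : eFun (F P D S₀ ρ₀) α <+: u := by
        refine List.prefix_of_prefix_length_le (e_pref_ss hP hD hS₀ ρ₀ α) hu ?_
        rw [e_len hP hD hS₀ ρ₀ α]; omega
      have het : eFun (F P D S₀ ρ₀) α <+: t := by
        refine List.prefix_of_prefix_length_le heu htu ?_
        rw [e_len hP hD hS₀ ρ₀ α]; omega
      exact ⟨hsst, fun h => hns ρ₀ h.symm, het⟩

lemma uniq {t : List W1} (hns : ∀ ρ, t ≠ (F P D S₀ ρ).nd) :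
    ∀ u₁ ∈ succs (Tlim P D S₀) t, ∀ u₂ ∈ succs (Tlim P D S₀) t, u₁ = u₂ := by
  -- helper for the asymmetric "both cons" case
  have key : ∀ (u₁ u₂ t : List W1) (α₁ α₂ : W1) (ρ₁ ρ₂ : List W1),
      (∀ ρ, t ≠ (F P D S₀ ρ).nd) →
      u₁.length = t.length + 1 → u₂.length = t.length + 1 →
      u₁ <+: (F P D S₀ (α₁ :: ρ₁)).nd → eFun (F P D S₀ ρ₁) α₁ <+: t →
      u₂ <+: (F P D S₀ (α₂ :: ρ₂)).nd → eFun (F P D S₀ ρ₂) α₂ <+: t →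
      (F P D S₀ ρ₁).nd <+: (F P D S₀ ρ₂).nd → u₁ = u₂ := by
    intro u₁ u₂ t α₁ α₂ ρ₁ ρ₂ hns hl1 hl2 hu1 he1 hu2 he2 hpref
    obtain ⟨τ, rfl⟩ := suffix_of_pref hP hD hS₀ ρ₁ ρ₂ hpref
    rcases τ.eq_nil_or_concat with rfl | ⟨τ₁, β, rfl⟩
    · -- same level: α₁ = α₂
      rw [List.nil_append] at hu2
      have : eFun (F P D S₀ ρ₁) α₁ = eFun (F P D S₀ ρ₁) α₂ :=
        pref_eq he1 he2 (by rw [e_len hP hD hS₀ ρ₁ α₁, e_len hP hD hS₀ ρ₁ α₂])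
      have hα : α₁ = α₂ := e_inj hP hD hS₀ ρ₁ this
      subst hα
      exact pref_eq hu1 hu2 (by omega)
    · -- ρ₂ properly extends ρ₁ : contradiction
      exfalso
      simp only [List.concat_eq_append, List.append_assoc, List.singleton_append] at he2 hu2 hpref
      have heβ : eFun (F P D S₀ ρ₁) β <+: (F P D S₀ (τ₁ ++ β :: ρ₁)).nd :=
        e_pref_append hP hD hS₀ τ₁ ρ₁ β
      have hsst : (F P D S₀ (τ₁ ++ β :: ρ₁)).nd <+: t :=
        (ss_pref_e hP hD hS₀ _ α₂).trans he2
      have heβt : eFun (F P D S₀ ρ₁) β <+: t := heβ.trans hsst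
      have : eFun (F P D S₀ ρ₁) α₁ = eFun (F P D S₀ ρ₁) β :=
        pref_eq he1 heβt (by rw [e_len hP hD hS₀ ρ₁ α₁, e_len hP hD hS₀ ρ₁ β])
      have hab : α₁ = β := e_inj hP hD hS₀ ρ₁ this
      subst hab
      have h1 : (F P D S₀ (α₁ :: ρ₁)).nd <+: t :=
        (ss_pref_append hP hD hS₀ τ₁ (α₁ :: ρ₁)).trans hsst
      have := hu1.length_le
      have := h1.length_le
      omega
  rintro u₁ ⟨⟨σ₁, hσ₁⟩, ht1, hl1⟩ u₂ ⟨⟨σ₂, hσ₂⟩, ht2, hl2⟩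
  rcases locate hP hD hS₀ σ₁ t u₁ hns ht1 hl1 hσ₁ with ⟨hu1, ht1'⟩ | ⟨α₁, ρ₁, hu1, hρ₁, hne₁, he₁⟩ <;>
    rcases locate hP hD hS₀ σ₂ t u₂ hns ht2 hl2 hσ₂ with ⟨hu2, ht2'⟩ | ⟨α₂, ρ₂, hu2, hρ₂, hne₂, he₂⟩
  · exact pref_eq hu1 hu2 (by omega)
  · -- u₁ at root, u₂ deeper : contradiction
    exfalso
    have hssρ : (F P D S₀ ρ₂).nd <+: (F P D S₀ ([] : List W1)).nd := hρ₂.trans ht1'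
    obtain ⟨τ, hτ⟩ := suffix_of_pref hP hD hS₀ ρ₂ [] hssρ
    have hρnil : ρ₂ = [] := by
      have := congrArg List.length hτ
      simp at this
      exact this.2
    subst hρnil
    have : t = (F P D S₀ ([] : List W1)).nd :=
      ht1'.eq_of_length (le_antisymm ht1'.length_le hρ₂.length_le)
    exact hne₂ this.symm
  · exfalso
    have hssρ : (F P D S₀ ρ₁).nd <+: (F P D S₀ ([] : List W1)).nd := hρ₁.trans ht2'
    obtain ⟨τ, hτ⟩ := suffix_of_pref hP hD hS₀ ρ₁ [] hssρ
    have hρnil : ρ₁ = [] := by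
      have := congrArg List.length hτ
      simp at this
      exact this.2
    subst hρnil
    have : t = (F P D S₀ ([] : List W1)).nd :=
      ht2'.eq_of_length (le_antisymm ht2'.length_le hρ₁.length_le)
    exact hne₁ this.symm
  · -- both deeper
    rcases le_total (F P D S₀ ρ₁).nd.length (F P D S₀ ρ₂).nd.length with hle | hle
    · exact key u₁ u₂ t α₁ α₂ ρ₁ ρ₂ hns hl1 hl2 hu1 he₁ hu2 he₂
        (List.prefix_of_prefix_length_le hρ₁ hρ₂ hle)
    · exact (key u₂ u₁ t α₂ α₁ ρ₂ ρ₁ hns hl2 hl1 hu2 he₂ hu1 he₁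
        (List.prefix_of_prefix_length_le hρ₂ hρ₁ hle)).symm

lemma BN_Tlim_sub : BN (Tlim P D S₀) ⊆ Set.range (fun σ => (F P D S₀ σ).nd) := by
  intro t ht
  by_contra hns
  have hns' : ∀ ρ, t ≠ (F P D S₀ ρ).nd := fun ρ h => hns ⟨ρ, h.symm⟩
  obtain ⟨x, y, hxy⟩ := Cardinal.two_le_iff.mp ht.2
  exact hxy (Subtype.ext (uniq hP hD hS₀ hns' x x.2 y y.2))

end

/-- counting proper suffixes of a list -/
lemma suffixes_count : ∀ σ : List W1,
    {ρ | ρ <:+ σ ∧ ρ ≠ σ}.Finite ∧ {ρ | ρ <:+ σ ∧ ρ ≠ σ}.ncard = σ.length := by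
  intro σ
  induction σ with
  | nil =>
    have he : {ρ : List W1 | ρ <:+ [] ∧ ρ ≠ []} = ∅ := by
      ext ρ
      simp only [Set.mem_setOf_eq, Set.mem_empty_iff_false, iff_false, not_and,
        List.suffix_nil]
      exact fun h => by simp [h]
    rw [he]
    exact ⟨Set.finite_empty, by simp⟩
  | cons α σ ih =>
    have he : {ρ | ρ <:+ α :: σ ∧ ρ ≠ α :: σ} = insert σ {ρ | ρ <:+ σ ∧ ρ ≠ σ} := by
      ext ρ
      simp only [Set.mem_setOf_eq, Set.mem_insert_iff, List.suffix_cons_iff]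
      constructor
      · rintro ⟨h1 | h1, h2⟩
        · exact absurd h1 h2
        · by_cases hρ : ρ = σ
          · exact Or.inl hρ
          · exact Or.inr ⟨h1, hρ⟩
      · rintro (h0 | ⟨h1, h2⟩)
        · subst h0
          refine ⟨Or.inr (List.suffix_refl _), ?_⟩
          intro h
          exact absurd (congrArg List.length h) (by simp)
        · refine ⟨Or.inr h1, ?_⟩
          rintro rfl
          exact absurd h1.length_le (by simp)
    have hσnot : σ ∉ {ρ : List W1 | ρ <:+ σ ∧ ρ ≠ σ} := fun h => h.2 rfl
    rw [he]
    refine ⟨ih.1.insert σ, ?_⟩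
    rw [Set.ncard_insert_of_notMem hσnot ih.1, ih.2]
    simp

section
include hP hD hS₀

lemma belowBN_eq (σ : List W1) :
    belowBN (Tlim P D S₀) (F P D S₀ σ).nd =
      (fun ρ => (F P D S₀ ρ).nd) '' {ρ | ρ <:+ σ ∧ ρ ≠ σ} := by
  ext u
  constructor
  · rintro ⟨hBN, hpre, hne⟩
    obtain ⟨ρ, rfl⟩ := BN_Tlim_sub hP hD hS₀ hBN
    refine ⟨ρ, ⟨suffix_of_pref hP hD hS₀ ρ σ hpre, ?_⟩, rfl⟩
    rintro rfl
    exact hne rfl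
  · rintro ⟨ρ, ⟨⟨τ, rfl⟩, hne⟩, rfl⟩
    refine ⟨ss_BN_Tlim hP hD hS₀ ρ, ss_pref_append hP hD hS₀ τ ρ, ?_⟩
    intro h
    exact hne (ss_inj hP hD hS₀ _ _ h)

lemma BNn_char (n : ℕ) {t : List W1} (ht : t ∈ BNn (Tlim P D S₀) n) :
    ∃ σ, t = (F P D S₀ σ).nd ∧ σ.length = n := by
  obtain ⟨ρ, rfl⟩ := BN_Tlim_sub hP hD hS₀ ht.1
  refine ⟨ρ, rfl, ?_⟩
  have h1 := ht.2.2
  rw [belowBN_eq hP hD hS₀ ρ,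
    Set.ncard_image_of_injective _ (fun a b h => ss_inj hP hD hS₀ a b h),
    (suffixes_count ρ).2] at h1
  exact h1

lemma TT_mono (τ σ : List W1) : (F P D S₀ (τ ++ σ)).Tt ⊆ (F P D S₀ σ).Tt := by
  induction τ with
  | nil => exact fun t ht => ht
  | cons β τ ih =>
    intro t ht
    rw [List.cons_append] at ht
    exact ih ((F_step hP hD hS₀ (τ ++ σ) β).2.1 ht).1

lemma restr_sub (σ : List W1) : restr (Tlim P D S₀) (F P D S₀ σ).nd ⊆ (F P D S₀ σ).Tt := by
  rintro t ⟨⟨σ', hσ'⟩, hcomp⟩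
  rcases hcomp with h | h
  · have hss : (F P D S₀ σ).nd <+: (F P D S₀ σ').nd := h.trans hσ'
    obtain ⟨τ, rfl⟩ := suffix_of_pref hP hD hS₀ σ σ' hss
    exact TT_mono hP hD hS₀ τ σ
      (TT_tree hP hD hS₀ (τ ++ σ) _ (ss_mem hP hD hS₀ (τ ++ σ)) _ hσ')
  · exact TT_tree hP hD hS₀ σ _ (ss_mem hP hD hS₀ σ) _ h

lemma wide_Tlim : Wide (Tlim P D S₀) := by
  refine ⟨⟨(F P D S₀ []).nd, ss_mem_Tlim hP hD hS₀ []⟩, tree_Tlim hP hD hS₀, ?_, ?_⟩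
  · rintro s ⟨σ, hσ⟩
    exact ⟨(F P D S₀ σ).nd, ss_BN_Tlim hP hD hS₀ σ, hσ⟩
  · intro s hs
    obtain ⟨σ, rfl⟩ := BN_Tlim_sub hP hD hS₀ hs
    exact mk_succs_Tlim hP hD hS₀ σ

end

end Stmt6

/-- fusion through countably many pre-dense sets. -/
theorem stmt6 (P : Set (Set (List W1))) (hP : WTForcing P)
    (D : ℕ → Set (Set (List W1))) (hD : ∀ n, D n ⊆ P ∧ PreDenseIn (D n) P)
    (S₀ : Set (List W1)) (hS₀ : S₀ ∈ P) :
    ∃ T : Set (List W1), Wide T ∧ T ⊆ S₀ ∧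
      ∀ n, ∀ s ∈ BNn T n, ∃ S ∈ D n, restr T s ⊆ S := by
  refine ⟨Stmt6.Tlim P D S₀, Stmt6.wide_Tlim hP hD hS₀, Stmt6.Tlim_sub hP hD hS₀, ?_⟩
  intro n s hs
  obtain ⟨σ, rfl, hlen⟩ := Stmt6.BNn_char hP hD hS₀ n hs
  obtain ⟨U, hU, hTU⟩ := (Stmt6.F_spec hP hD hS₀ σ).2.2.1
  exact ⟨U, hlen ▸ hU, fun t ht => hTU (Stmt6.restr_sub hP hD hS₀ σ ht)⟩
end
end

section
/- Let S be a wide tree and f : [S] → ω₁^ω a continuous map. Then there is a wide tree T ⊆ S such that either the image f''[T] is bounded (contained in β^ω for some β < ω₁) or f restricted to [T] is injective. -/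
noncomputable section

instance : TopologicalSpace W1 := ⊥

section S7AuxA

instance : DiscreteTopology W1 := ⟨rfl⟩

open Cardinal List

namespace S7

/-! ### List and seg basics -/

lemma prefix_total {α : Type*} {u v w : List α} (hu : u <+: w) (hv : v <+: w) :
    u <+: v ∨ v <+: u := by
  rcases le_total u.length v.length with h | h
  · left
    rw [prefix_iff_eq_take.mp hu, prefix_iff_eq_take.mp hv]
    exact (take_isPrefix_take (l := w)).2 (Or.inl h)
  · right
    rw [prefix_iff_eq_take.mp hu, prefix_iff_eq_take.mp hv]
    exact (take_isPrefix_take (l := w)).2 (Or.inl h)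

lemma prefix_of_prefix_le {α : Type*} {u v w : List α} (hu : u <+: w) (hv : v <+: w)
    (h : u.length ≤ v.length) : u <+: v := by
  rcases prefix_total hu hv with h' | h'
  · exact h'
  · rcases Nat.eq_or_lt_of_le h with he | hl
    · exact (h'.eq_of_length he.symm) ▸ prefix_rfl
    · exact absurd h'.length_le (by omega)

lemma take_eq_take_of_prefix {α : Type*} {u v : List α} (h : u <+: v) {n : ℕ}
    (hn : n ≤ u.length) : u.take n = v.take n := by
  obtain ⟨t, rfl⟩ := h
  rw [take_append, Nat.sub_eq_zero_of_le hn, take_zero, append_nil]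

lemma eq_take_of_prefix {α : Type*} {u v : List α} (h : u <+: v) :
    u = v.take u.length := prefix_iff_eq_take.mp h

lemma eq_of_prefix_len {α : Type*} {u v : List α} (h : u <+: v)
    (hl : u.length = v.length) : u = v := h.eq_of_length hl

lemma length_seg (x : ℕ → W1) (m : ℕ) : (seg x m).length = m := by simp [seg]

lemma getElem_seg (x : ℕ → W1) (m i : ℕ) (h : i < (seg x m).length) :
    (seg x m)[i] = x i := by simp [seg]

lemma take_seg (x : ℕ → W1) {k m : ℕ} (h : k ≤ m) : (seg x m).take k = seg x k := by
  apply List.ext_getElem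
  · simp [seg, h]
  · intro i h1 h2
    have : i < m := by simp [seg] at h2 ⊢; omega
    simp [seg, getElem_take]

lemma seg_prefix_seg (x : ℕ → W1) {k m : ℕ} (h : k ≤ m) : seg x k <+: seg x m := by
  rw [← take_seg x h]; exact take_prefix _ _

lemma prefix_seg {u : List W1} {x : ℕ → W1} {m : ℕ} (hp : u <+: seg x m) :
    u = seg x u.length := by
  have := eq_take_of_prefix hp
  rwa [take_seg x (by simpa [length_seg] using hp.length_le)] at this

lemma pow2_inj : ∀ a b k j : ℕ, 2^a*(2*k+1) = 2^b*(2*j+1) → a = b := by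
  intro a
  induction a with
  | zero =>
    intro b k j h
    cases b with
    | zero => rfl
    | succ b =>
      exfalso
      have h2 : 2^(b+1)*(2*j+1) = 2*(2^b*(2*j+1)) := by ring
      rw [h2] at h
      omega
  | succ a ih =>
    intro b k j h
    cases b with
    | zero =>
      exfalso
      have h2 : 2^(a+1)*(2*k+1) = 2*(2^a*(2*k+1)) := by ring
      rw [h2] at h
      omega
    | succ b =>
      have h2 : 2*(2^a*(2*k+1)) = 2*(2^b*(2*j+1)) := by
        calc 2*(2^a*(2*k+1)) = 2^(a+1)*(2*k+1) := by ring
        _ = 2^(b+1)*(2*j+1) := h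
        _ = 2*(2^b*(2*j+1)) := by ring
      exact congrArg Nat.succ (ih b k j (by omega))

/-! ### W1 cardinal facts -/

lemma mk_W1 : #W1 = ℵ₁ := by
  rw [Cardinal.mk_toType, Cardinal.card_ord]

instance : Nonempty W1 := by
  rw [← Cardinal.mk_ne_zero_iff, mk_W1]
  exact ne_of_gt (lt_of_le_of_lt (Cardinal.zero_le _) Cardinal.aleph0_lt_aleph_one)

lemma exists_pair_ne : ∃ a b : W1, a ≠ b := by
  rw [← Cardinal.two_le_iff, mk_W1]
  exact le_of_lt (lt_of_le_of_lt (Cardinal.nat_lt_aleph0 2).le Cardinal.aleph0_lt_aleph_one)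

lemma countable_Iio (a : W1) : (Set.Iio a).Countable := by
  rw [Cardinal.countable_iff_lt_aleph_one]; exact Cardinal.mk_Iio_ord_toType a

lemma countable_Iic (a : W1) : (Set.Iic a).Countable := by
  rw [← Set.Iio_union_right]
  exact (countable_Iio a).union (Set.countable_singleton a)

lemma not_countable_univ : ¬ (Set.univ : Set W1).Countable := by
  rw [Cardinal.countable_iff_lt_aleph_one, Cardinal.mk_univ, mk_W1]
  exact lt_irrefl _

lemma exists_ub {A : Set W1} (hA : A.Countable) : ∃ β : W1, ∀ a ∈ A, a < β := by
  by_contra h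
  push_neg at h
  refine not_countable_univ (Set.Countable.mono (fun β _ => ?_)
    (hA.biUnion fun a _ => countable_Iic a))
  obtain ⟨a, ha, hle⟩ := h β
  exact Set.mem_biUnion ha hle

lemma exists_big_fiber (g : W1 → ℕ) : ∃ n, #{α : W1 | g α = n} = ℵ₁ := by
  by_contra h
  push_neg at h
  have hc : ∀ n : ℕ, ({α : W1 | g α = n}).Countable := by
    intro n
    rw [Cardinal.countable_iff_lt_aleph_one]
    refine lt_of_le_of_ne ?_ (h n)
    calc #{α : W1 | g α = n} ≤ #W1 := Cardinal.mk_set_le _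
    _ = ℵ₁ := mk_W1
  refine not_countable_univ (Set.Countable.mono (fun β _ => ?_)
    (Set.countable_iUnion hc))
  exact Set.mem_iUnion.2 ⟨g β, rfl⟩

lemma wf_rec_exists {X : Type} (P : W1 → X → Prop) (v : X → W1)
    (main : ∀ α (prev : ∀ β : W1, β < α → X), ∃ p, P α p ∧ ∀ β (h : β < α), v (prev β h) < v p) :
    ∃ G : W1 → X, ∀ α, P α (G α) ∧ ∀ β, β < α → v (G β) < v (G α) := by
  have wf : WellFounded ((· < ·) : W1 → W1 → Prop) := IsWellFounded.wf
  refine ⟨wf.fix (fun α prev => Classical.choose (main α prev)), fun α => ?_⟩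
  have h1 := wf.fix_eq (fun α prev => Classical.choose (main α prev)) α
  rw [h1]
  have h2 := Classical.choose_spec (main α (fun β _ =>
    wf.fix (fun α prev => Classical.choose (main α prev)) β))
  exact ⟨h2.1, fun β hβ => h2.2 β hβ⟩

/-! ### succs bounds -/

lemma succ_decomp {α : Type*} {s t : List α} (h : s <+: t) (hl : t.length = s.length + 1) :
    ∃ c, t = s ++ [c] := by
  obtain ⟨r, rfl⟩ := h
  have : r.length = 1 := by simp at hl; omega
  obtain ⟨c, rfl⟩ := List.length_eq_one_iff.mp this
  exact ⟨c, rfl⟩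

lemma mk_succs_le (T : Set (List W1)) (s : List W1) : #(succs T s) ≤ ℵ₁ := by
  rw [← mk_W1]
  refine Cardinal.mk_le_of_injective (f := fun t : succs T s =>
    Classical.choose (succ_decomp t.2.2.1 t.2.2.2)) ?_
  intro t₁ t₂ he
  have e1 := Classical.choose_spec (succ_decomp t₁.2.2.1 t₁.2.2.2)
  have e2 := Classical.choose_spec (succ_decomp t₂.2.2.1 t₂.2.2.2)
  simp only at he
  apply Subtype.ext
  rw [e1, e2, he]

end S7
end S7AuxA
noncomputable section
open Cardinal List
namespace S7

variable {S : Set (List W1)}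

/-! ### Wide tree basics -/

lemma nil_mem (hS : Wide S) : [] ∈ S := by
  obtain ⟨s, hs⟩ := hS.1
  exact hS.2.1 s hs [] (List.nil_prefix)

lemma succs_nonempty {s : List W1} (h : 2 ≤ #(succs S s)) : ∃ t, t ∈ succs S s := by
  rw [← Set.nonempty_def]
  rw [← Set.nonempty_coe_sort]
  rw [← Cardinal.mk_ne_zero_iff]
  intro h0
  rw [h0] at h
  exact absurd h (by norm_num)

lemma two_succs {s : List W1} (h : 2 ≤ #(succs S s)) :
    ∃ t₁ t₂, t₁ ∈ succs S s ∧ t₂ ∈ succs S s ∧ t₁ ≠ t₂ := by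
  obtain ⟨x, y, hxy⟩ := Cardinal.two_le_iff.1 h
  exact ⟨x.1, y.1, x.2, y.2, fun he => hxy (Subtype.ext he)⟩

lemma extend_long (hS : Wide S) : ∀ (n : ℕ), ∀ u ∈ S, ∃ w ∈ S, u <+: w ∧ n ≤ w.length := by
  intro n
  induction n with
  | zero => exact fun u hu => ⟨u, hu, prefix_rfl, Nat.zero_le _⟩
  | succ n ih =>
    intro u hu
    obtain ⟨w, hw, huw, hlen⟩ := ih u hu
    obtain ⟨b, hbBN, hwb⟩ := hS.2.2.1 w hw
    obtain ⟨t, htS, hbt, hlt⟩ := succs_nonempty hbBN.2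
    refine ⟨t, htS, (huw.trans hwb).trans hbt, ?_⟩
    have := hwb.length_le
    omega

lemma extend_exact (hS : Wide S) {u : List W1} {l : ℕ} (hu : u ∈ S) (h : u.length ≤ l) :
    ∃ w ∈ S, u <+: w ∧ w.length = l := by
  obtain ⟨w, hw, huw, hlen⟩ := extend_long hS l u hu
  refine ⟨w.take l, hS.2.1 w hw _ (take_prefix _ _), ?_, by simp [hlen]⟩
  exact prefix_of_prefix_le huw (take_prefix _ _) (by simp; omega)

lemma branches_mono {T U : Set (List W1)} (h : T ⊆ U) : branches T ⊆ branches U :=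
  fun _ hx m => h (hx m)

/-! ### Restricted trees -/

lemma restr_sub (v : List W1) : restr S v ⊆ S := fun _ ht => ht.1

lemma seg_eq_of_branch_restr {v : List W1} {x : ℕ → W1} (hx : x ∈ branches (restr S v)) :
    seg x v.length = v := by
  have h := (hx v.length).2
  rcases h with h | h
  · exact ((eq_of_prefix_len h (by simp [length_seg])).symm)
  · exact eq_of_prefix_len h (by simp [length_seg])

lemma prefix_seg_of_branch_restr {v : List W1} {x : ℕ → W1} (hx : x ∈ branches (restr S v))
    {m : ℕ} (hm : v.length ≤ m) : v <+: seg x m := by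
  rw [← seg_eq_of_branch_restr hx]
  exact seg_prefix_seg x hm

lemma succs_restr {v b : List W1} (hvb : v <+: b) : succs (restr S v) b = succs S b := by
  ext t
  constructor
  · exact fun ht => ⟨ht.1.1, ht.2⟩
  · exact fun ht => ⟨⟨ht.1, Or.inl (hvb.trans (ht.2.1))⟩, ht.2⟩

lemma restr_wide (hS : Wide S) {v : List W1} (hv : v ∈ S) : Wide (restr S v) := by
  have htree : IsTree (restr S v) := by
    intro s hs t hts
    refine ⟨hS.2.1 s hs.1 t hts, ?_⟩
    rcases hs.2 with h | h
    · rcases prefix_total hts h with h' | h'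
      · exact Or.inr h'
      · exact Or.inl h'
    · exact Or.inr (hts.trans h)
  refine ⟨⟨v, hv, Or.inl prefix_rfl⟩, htree, ?_, ?_⟩
  · -- every node extends to a branching node
    intro s hs
    have hw : ∃ w, w ∈ S ∧ s <+: w ∧ v <+: w := by
      rcases hs.2 with h | h
      · exact ⟨s, hs.1, prefix_rfl, h⟩
      · exact ⟨v, hv, h, prefix_rfl⟩
    obtain ⟨w, hwS, hsw, hvw⟩ := hw
    obtain ⟨b, hbBN, hwb⟩ := hS.2.2.1 w hwS
    have hvb : v <+: b := hvw.trans hwb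
    refine ⟨b, ⟨⟨hbBN.1, Or.inl hvb⟩, ?_⟩, hsw.trans hwb⟩
    rw [succs_restr hvb]
    exact hbBN.2
  · -- branching nodes have aleph1 successors
    intro s hs
    rcases hs.1.2 with h | h
    · have hrw : succs (restr S v) s = succs S s := succs_restr h
      have h2 := hs.2
      rw [hrw] at h2
      rw [hrw]
      exact hS.2.2.2 s ⟨hs.1.1, h2⟩
    · -- s <+: v : impossible unless s = v
      by_cases hsv : s = v
      · subst hsv
        have hrw : succs (restr S s) s = succs S s := succs_restr prefix_rfl
        have h2 := hs.2
        rw [hrw] at h2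
        rw [hrw]
        exact hS.2.2.2 s ⟨hs.1.1, h2⟩
      · exfalso
        -- succs (restr S v) s has at most one element
        have hsub : succs (restr S v) s ⊆ {v.take (s.length + 1)} := by
          intro t ht
          have hlen : t.length = s.length + 1 := ht.2.2
          have hsl : s.length < v.length := by
            have := h.length_le
            rcases Nat.eq_or_lt_of_le this with he | hl
            · exact absurd (eq_of_prefix_len h he) hsv
            · exact hl
          have htv : t <+: v := by
            rcases ht.1.2 with h' | h'
            · -- v <+: t, so v.length ≤ s.length + 1, hence t = v
              have := h'.length_le
              have hev : v = t := eq_of_prefix_len h' (by omega)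
              rw [← hev]
            · exact h'
          rw [Set.mem_singleton_iff, eq_take_of_prefix htv, hlen]
        have h1 : #(succs (restr S v) s) ≤ 1 := by
          calc #(succs (restr S v) s) ≤ #({v.take (s.length + 1)} : Set (List W1)) :=
            Cardinal.mk_le_mk_of_subset hsub
          _ = 1 := Cardinal.mk_singleton _
        have h2 := hs.2
        have := h2.trans h1
        norm_num at this

end S7
end
noncomputable section
open Cardinal List
namespace S7

variable {S : Set (List W1)}

lemma prefix_seg_len {u : List W1} {x : ℕ → W1} {m : ℕ} (hp : u <+: seg x m) :
    u <+: seg x u.length := by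
  conv_lhs => rw [prefix_seg hp]

/-! ### Continuity -/

lemma cont_force {f : (ℕ → W1) → ℕ → W1} (hf : ContinuousOn f (branches S))
    {x : ℕ → W1} (hx : x ∈ branches S) (n : ℕ) :
    ∃ m, ∀ y ∈ branches S, seg y m = seg x m → f y n = f x n := by
  have h1 : ContinuousWithinAt (fun y => f y n) (branches S) x :=
    ((continuous_apply n).continuousAt).comp_continuousWithinAt (hf x hx)
  have h2 := h1 ((isOpen_discrete ({f x n} : Set W1)).mem_nhds rfl)
  rw [Filter.mem_map, mem_nhdsWithin] at h2
  obtain ⟨U, hUo, hxU, hUsub⟩ := h2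
  obtain ⟨I, u, hu, hIsub⟩ := isOpen_pi_iff.1 hUo x hxU
  refine ⟨I.sup id + 1, fun y hy hseg => ?_⟩
  have hyU : y ∈ U := by
    apply hIsub
    intro i hi
    have hiult : i < I.sup id + 1 := Nat.lt_succ_of_le (Finset.le_sup (f := id) hi)
    have hyx : y i = x i := by
      have hg := List.getElem_of_eq hseg (i := i)
        (by rw [length_seg]; exact hiult)
      rwa [getElem_seg, getElem_seg] at hg
    rw [hyx]
    exact (hu i hi).2
  have := hUsub ⟨hyU, hy⟩
  simpa using this

lemma force_of_unbdd {f : (ℕ → W1) → ℕ → W1} (hf : ContinuousOn f (branches S))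
    (hunb : ∀ v ∈ S, ∀ β : W1, ∃ x ∈ branches S, seg x v.length = v ∧ ∃ n : ℕ, β ≤ f x n) :
    ∀ v ∈ S, ∀ β : W1, ∃ w, w ∈ S ∧ v <+: w ∧ ∃ n δ, β ≤ δ ∧
      ∀ y ∈ branches S, w <+: seg y w.length → f y n = δ := by
  intro v hv β
  obtain ⟨x, hx, hseg, n, hβ⟩ := hunb v hv β
  obtain ⟨m, hm⟩ := cont_force hf hx n
  refine ⟨seg x (max m v.length), hx _, ?_, n, f x n, hβ, ?_⟩
  · have h := seg_prefix_seg x (le_max_right m v.length)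
    rwa [hseg] at h
  · intro y hy hpre
    apply hm y hy
    have hlen : (seg x (max m v.length)).length = max m v.length := length_seg _ _
    have h2 := take_eq_take_of_prefix hpre (n := m) (by rw [hlen]; exact le_max_left _ _)
    rw [hlen] at h2
    rw [take_seg x (le_max_left _ _)] at h2
    rw [take_seg y (le_max_left _ _)] at h2
    exact h2.symm

/-! ### The step data -/

structure StepProps (S : Set (List W1)) (f : (ℕ → W1) → ℕ → W1)
    (bf : List W1 → List W1) (Cf : List W1 → W1 → List W1)
    (Nf : List W1 → ℕ) (df : List W1 → W1 → W1) : Prop where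
  bp : ∀ u ∈ S, u <+: bf u
  cmem : ∀ u ∈ S, ∀ α : W1, Cf u α ∈ S
  bc : ∀ u ∈ S, ∀ α : W1, bf u <+: Cf u α
  clen : ∀ u ∈ S, ∀ α : W1, (bf u).length < (Cf u α).length
  code : ∀ u ∈ S, ∀ α : W1, ∃ k, (Cf u α).length = 2 ^ u.length * (2 * k + 1)
  cdist : ∀ u ∈ S, ∀ α β : W1, α ≠ β →
    (Cf u α).take ((bf u).length + 1) ≠ (Cf u β).take ((bf u).length + 1)
  dinj : ∀ u ∈ S, Function.Injective (df u)
  forces : ∀ u ∈ S, ∀ α : W1, ∀ x ∈ branches S, Cf u α <+: seg x (Cf u α).length →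
    f x (Nf u) = df u α

lemma step_exists {f : (ℕ → W1) → ℕ → W1} (hS : Wide S)
    (hforce : ∀ v ∈ S, ∀ β : W1, ∃ w, w ∈ S ∧ v <+: w ∧ ∃ n δ, β ≤ δ ∧
      ∀ y ∈ branches S, w <+: seg y w.length → f y n = δ) :
    ∃ bf Cf Nf df, StepProps S f bf Cf Nf df := by
  have key : ∀ u : List W1, ∃ (b : List W1) (C : W1 → List W1) (N : ℕ) (d : W1 → W1), u ∈ S →
      (u <+: b) ∧ (∀ α : W1, C α ∈ S) ∧ (∀ α : W1, b <+: C α) ∧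
      (∀ α : W1, b.length < (C α).length) ∧
      (∀ α : W1, ∃ k, (C α).length = 2 ^ u.length * (2 * k + 1)) ∧
      (∀ α β : W1, α ≠ β → (C α).take (b.length + 1) ≠ (C β).take (b.length + 1)) ∧
      Function.Injective d ∧
      (∀ α : W1, ∀ x ∈ branches S, C α <+: seg x (C α).length → f x N = d α) := by
    intro u
    by_cases hu : u ∈ S
    case neg => exact ⟨u, fun _ => u, 0, fun α => α, fun h => absurd h hu⟩
    obtain ⟨b, hbBN, hub⟩ := hS.2.2.1 u hu
    obtain ⟨φ⟩ : Nonempty (W1 ≃ ↥(succs S b)) :=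
      Cardinal.eq.1 (mk_W1.trans (hS.2.2.2 b hbBN).symm)
    set P : W1 → (List W1 × ℕ × W1) → Prop := fun α p =>
      p.1 ∈ S ∧ (φ α : List W1) <+: p.1 ∧
      (∃ k, p.1.length = 2 ^ u.length * (2 * k + 1)) ∧ b.length < p.1.length ∧
      (∀ x ∈ branches S, p.1 <+: seg x p.1.length → f x p.2.1 = p.2.2) with hP
    have main : ∀ (α : W1) (prev : ∀ β : W1, β < α → List W1 × ℕ × W1),
        ∃ p, P α p ∧ ∀ β (h : β < α),
          (fun q : List W1 × ℕ × W1 => q.2.2) (prev β h) <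
          (fun q : List W1 × ℕ × W1 => q.2.2) p := by
      intro α prev
      have hcnt : (Set.range (fun q : (Set.Iio α) => (prev q.1 q.2).2.2)).Countable := by
        haveI := (countable_Iio α).to_subtype
        exact Set.countable_range _
      obtain ⟨β₀, hβ₀⟩ := exists_ub hcnt
      have hφS : (φ α : List W1) ∈ S := (φ α).2.1
      obtain ⟨w₀, hw₀S, hpre, n, δ, hβδ, hfor⟩ := hforce (φ α) hφS β₀
      set k := w₀.length + b.length + 1 with hk
      have hpos : 0 < 2 ^ u.length := Nat.pow_pos (by norm_num)
      have hl1 : 2 * k + 1 ≤ 2 ^ u.length * (2 * k + 1) :=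
        Nat.le_mul_of_pos_left _ hpos
      obtain ⟨w, hwS, hw₀w, hwlen⟩ := extend_exact hS hw₀S
        (l := 2 ^ u.length * (2 * k + 1)) (by omega)
      refine ⟨(w, n, δ), ⟨hwS, hpre.trans hw₀w, ⟨k, hwlen⟩, by simp only; omega, ?_⟩, ?_⟩
      · intro x hx hp
        exact hfor x hx (prefix_seg_len (hw₀w.trans hp))
      · intro β hβ
        exact lt_of_lt_of_le (hβ₀ _ ⟨⟨β, hβ⟩, rfl⟩) hβδ
    obtain ⟨G, hG⟩ := wf_rec_exists P (fun q => q.2.2) main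
    obtain ⟨N, hN⟩ := exists_big_fiber (fun α => (G α).2.1)
    obtain ⟨ψ⟩ : Nonempty (W1 ≃ ↥{α : W1 | (G α).2.1 = N}) :=
      Cardinal.eq.1 (mk_W1.trans hN.symm)
    have hGinj : ∀ a b : W1, (G a).2.2 = (G b).2.2 → a = b := by
      intro a b he
      rcases lt_trichotomy a b with h | h | h
      · exact absurd he (ne_of_lt ((hG b).2 a h))
      · exact h
      · exact absurd he.symm (ne_of_lt ((hG a).2 b h))
    have hsucc : ∀ α : W1, (φ α : List W1) ∈ succs S b := fun α => (φ α).2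
    have htake : ∀ α : W1, ((G (ψ α).1).1).take (b.length + 1) = (φ (ψ α).1 : List W1) := by
      intro α
      have h1 : (φ (ψ α).1 : List W1) <+: (G (ψ α).1).1 := (hG (ψ α).1).1.2.1
      have h2 : (φ (ψ α).1 : List W1).length = b.length + 1 := (hsucc (ψ α).1).2.2
      rw [eq_take_of_prefix h1, h2]
    refine ⟨b, fun α => (G (ψ α).1).1, N, fun α => (G (ψ α).1).2.2, fun _ => ?_⟩
    refine ⟨hub, fun α => (hG _).1.1,
      fun α => ((hsucc (ψ α).1).2.1).trans (hG _).1.2.1,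
      fun α => lt_of_lt_of_le ?_ le_rfl,
      fun α => (hG _).1.2.2.1,
      fun α β hne => ?_, fun a c he => ?_, fun α x hx hp => ?_⟩
    · exact (hG (ψ α).1).1.2.2.2.1
    · intro hteq
      rw [htake α, htake β] at hteq
      exact hne (ψ.injective (Subtype.ext (φ.injective (Subtype.ext hteq))))
    · simp only at he
      exact ψ.injective (Subtype.ext (hGinj _ _ he))
    · have hfx := (hG (ψ α).1).1.2.2.2.2 x hx hp
      rwa [(ψ α).2] at hfx
  choose bf Cf Nf df h using key
  exact ⟨bf, Cf, Nf, df,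
    ⟨fun u hu => (h u hu).1, fun u hu => (h u hu).2.1, fun u hu => (h u hu).2.2.1,
     fun u hu => (h u hu).2.2.2.1, fun u hu => (h u hu).2.2.2.2.1,
     fun u hu => (h u hu).2.2.2.2.2.1, fun u hu => (h u hu).2.2.2.2.2.2.1,
     fun u hu => (h u hu).2.2.2.2.2.2.2⟩⟩

end S7
end
noncomputable section
open Cardinal List
namespace S7

def Ef (Cf : List W1 → W1 → List W1) (σ : List W1) : List W1 :=
  σ.foldr (fun α u => Cf u α) []

def TT (Cf : List W1 → W1 → List W1) : Set (List W1) :=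
  {w | ∃ σ, w <+: Ef Cf σ}

section Construction

variable {S : Set (List W1)} {f : (ℕ → W1) → ℕ → W1}
  {bf : List W1 → List W1} {Cf : List W1 → W1 → List W1}
  {Nf : List W1 → ℕ} {df : List W1 → W1 → W1}

lemma E_cons (Cf : List W1 → W1 → List W1) (γ : W1) (ρ : List W1) :
    Ef Cf (γ :: ρ) = Cf (Ef Cf ρ) γ := rfl

lemma E_nil (Cf : List W1 → W1 → List W1) : Ef Cf [] = [] := rfl

lemma prefix_lt_len {α : Type*} {u v : List α} (h : u <+: v) (hne : u ≠ v) :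
    u.length < v.length := by
  rcases Nat.eq_or_lt_of_le h.length_le with he | hl
  · exact absurd (eq_of_prefix_len h he) hne
  · exact hl

variable (hS : Wide S) (st : StepProps S f bf Cf Nf df)
include hS st

lemma E_mem : ∀ σ, Ef Cf σ ∈ S := by
  intro σ
  induction σ with
  | nil => exact nil_mem hS
  | cons γ ρ ih => exact st.cmem _ ih γ

lemma E_prefix_cons (γ : W1) (ρ : List W1) : Ef Cf ρ <+: Ef Cf (γ :: ρ) :=
  (st.bp _ (E_mem hS st ρ)).trans (st.bc _ (E_mem hS st ρ) γ)

lemma E_len_cons (γ : W1) (ρ : List W1) :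
    (Ef Cf ρ).length < (Ef Cf (γ :: ρ)).length :=
  lt_of_le_of_lt (st.bp _ (E_mem hS st ρ)).length_le (st.clen _ (E_mem hS st ρ) γ)

omit hS

lemma take_inj {u : List W1} (hu : u ∈ S) {α β : W1} (h : Cf u α <+: Cf u β) : α = β := by
  by_contra hne
  apply st.cdist u hu α β hne
  exact take_eq_take_of_prefix h (by have := st.clen u hu α; omega)

include hS

lemma nest : ∀ (n : ℕ) (τ σ : List W1), (Ef Cf τ).length ≤ n → Ef Cf σ <+: Ef Cf τ →
    Ef Cf σ ≠ Ef Cf τ → ∃ α, Cf (Ef Cf σ) α <+: Ef Cf τ := by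
  intro n
  induction n with
  | zero =>
    intro τ σ hlen hp hne
    exact absurd (eq_of_prefix_len hp (by have := hp.length_le; omega)) hne
  | succ n ih =>
    intro τ σ hlen hp hne
    match τ with
    | [] =>
      exfalso
      exact hne (prefix_nil.mp hp)
    | γ :: ρ =>
      rcases le_or_gt (Ef Cf σ).length (Ef Cf ρ).length with hle | hlt
      · have hpp : Ef Cf σ <+: Ef Cf ρ :=
          prefix_of_prefix_le hp (E_prefix_cons hS st γ ρ) hle
        by_cases heq : Ef Cf σ = Ef Cf ρ
        · refine ⟨γ, ?_⟩
          rw [heq]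
          exact prefix_rfl
        · obtain ⟨α, hα⟩ := ih ρ σ (by have := E_len_cons hS st γ ρ; omega) hpp heq
          exact ⟨α, hα.trans (E_prefix_cons hS st γ ρ)⟩
      · exfalso
        have hpρσ : Ef Cf ρ <+: Ef Cf σ :=
          prefix_of_prefix_le (E_prefix_cons hS st γ ρ) hp hlt.le
        have hneρσ : Ef Cf ρ ≠ Ef Cf σ := fun he => by rw [he] at hlt; exact lt_irrefl _ hlt
        have hσlt : (Ef Cf σ).length < (Ef Cf (γ :: ρ)).length := prefix_lt_len hp hne
        obtain ⟨β, hβ⟩ := ih σ ρ (by omega) hpρσ hneρσ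
        have hβγ : β = γ := take_inj st (E_mem hS st ρ) (hβ.trans hp)
        rw [hβγ] at hβ
        have h1 : (Ef Cf (γ :: ρ)).length ≤ (Ef Cf σ).length := hβ.length_le
        omega

lemma fork : ∀ (τ τ' : List W1), ¬ Ef Cf τ <+: Ef Cf τ' → ¬ Ef Cf τ' <+: Ef Cf τ →
    ∃ σ α α', α ≠ α' ∧ Cf (Ef Cf σ) α <+: Ef Cf τ ∧ Cf (Ef Cf σ) α' <+: Ef Cf τ' := by
  intro τ
  induction τ with
  | nil =>
    intro τ' h1 _
    exact absurd (List.nil_prefix) h1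
  | cons γ ρ ih =>
    intro τ' h1 h2
    by_cases hc1 : Ef Cf ρ <+: Ef Cf τ'
    · have hne : Ef Cf ρ ≠ Ef Cf τ' := by
        intro he
        apply h2
        rw [← he]
        exact E_prefix_cons hS st γ ρ
      obtain ⟨β, hβ⟩ := nest hS st (Ef Cf τ').length τ' ρ le_rfl hc1 hne
      refine ⟨ρ, γ, β, ?_, prefix_rfl, hβ⟩
      rintro rfl
      exact h1 hβ
    · by_cases hc2 : Ef Cf τ' <+: Ef Cf ρ
      · exact absurd (hc2.trans (E_prefix_cons hS st γ ρ)) h2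
      · obtain ⟨σ, α, α', hne, ha, hb⟩ := ih τ' hc1 hc2
        exact ⟨σ, α, α', hne, ha.trans (E_prefix_cons hS st γ ρ), hb⟩

lemma sc' (σ' σ : List W1) (α : W1) (hp : Ef Cf σ' <+: Ef Cf (α :: σ))
    (hne : Ef Cf σ' ≠ Ef Cf (α :: σ)) : Ef Cf σ' <+: Ef Cf σ := by
  rcases le_or_gt (Ef Cf σ').length (Ef Cf σ).length with hle | hlt
  · exact prefix_of_prefix_le hp (E_prefix_cons hS st α σ) hle
  · exfalso
    have hpσσ' : Ef Cf σ <+: Ef Cf σ' :=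
      prefix_of_prefix_le (E_prefix_cons hS st α σ) hp hlt.le
    have hne2 : Ef Cf σ ≠ Ef Cf σ' := fun he => by rw [he] at hlt; exact lt_irrefl _ hlt
    obtain ⟨β, hβ⟩ := nest hS st _ σ' σ le_rfl hpσσ' hne2
    have hβα : β = α := take_inj st (E_mem hS st σ) (hβ.trans hp)
    rw [hβα] at hβ
    have h1 : (Ef Cf (α :: σ)).length ≤ (Ef Cf σ').length := hβ.length_le
    exact hne (eq_of_prefix_len hp (le_antisymm hp.length_le h1))

lemma parent_eq (σ σ₂ : List W1) (α β : W1) (h : Cf (Ef Cf σ) α = Cf (Ef Cf σ₂) β) :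
    Ef Cf σ = Ef Cf σ₂ := by
  obtain ⟨k, hk⟩ := st.code _ (E_mem hS st σ) α
  obtain ⟨j, hj⟩ := st.code _ (E_mem hS st σ₂) β
  have hlen : (Ef Cf σ).length = (Ef Cf σ₂).length := by
    apply pow2_inj _ _ k j
    rw [← hk, ← hj, h]
  have p1 : Ef Cf σ <+: Cf (Ef Cf σ) α :=
    (st.bp _ (E_mem hS st σ)).trans (st.bc _ (E_mem hS st σ) α)
  have p2 : Ef Cf σ₂ <+: Cf (Ef Cf σ) α := by
    rw [h]
    exact (st.bp _ (E_mem hS st σ₂)).trans (st.bc _ (E_mem hS st σ₂) β)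
  rcases prefix_total p1 p2 with h' | h'
  · exact eq_of_prefix_len h' hlen
  · exact (eq_of_prefix_len h' hlen.symm).symm

lemma follow {x : ℕ → W1} (hx : x ∈ branches (TT Cf)) {τ σ : List W1} {α : W1} {m : ℕ}
    (hxm : seg x m <+: Ef Cf τ) (hC : Cf (Ef Cf σ) α <+: Ef Cf τ)
    (hm : (bf (Ef Cf σ)).length < m) :
    Cf (Ef Cf σ) α <+: seg x (Cf (Ef Cf σ) α).length := by
  by_cases hmw : (Cf (Ef Cf σ) α).length ≤ m
  · exact prefix_seg_len
      (prefix_of_prefix_le hC hxm (by rw [length_seg]; exact hmw))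
  push_neg at hmw
  have hxmw : seg x m <+: Cf (Ef Cf σ) α :=
    prefix_of_prefix_le hxm hC (by rw [length_seg]; omega)
  obtain ⟨ρ, hρ⟩ := hx (Cf (Ef Cf σ) α).length
  by_cases hc1 : Cf (Ef Cf σ) α <+: Ef Cf ρ
  · exact prefix_of_prefix_le hc1 hρ (by rw [length_seg])
  by_cases hc2 : Ef Cf ρ <+: Cf (Ef Cf σ) α
  · exfalso
    have h1 := hρ.length_le
    rw [length_seg] at h1
    have h2 := hc2.length_le
    apply hc1
    have : Ef Cf ρ = Cf (Ef Cf σ) α := eq_of_prefix_len hc2 (by omega)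
    rw [← this]
  obtain ⟨σ₂, β, β', hne, hb1, hb2⟩ := fork hS st (α :: σ) ρ hc1 hc2
  have hb1' : Cf (Ef Cf σ₂) β <+: Cf (Ef Cf σ) α := hb1
  have hL₂m : (bf (Ef Cf σ₂)).length < m := by
    by_cases hw2 : Cf (Ef Cf σ₂) β = Cf (Ef Cf σ) α
    · have heq := parent_eq hS st σ₂ σ β α hw2
      rw [heq]
      exact hm
    · have hsub : Ef Cf (β :: σ₂) <+: Ef Cf σ := sc' hS st (β :: σ₂) σ α hb1' hw2
      have h1 : (bf (Ef Cf σ₂)).length < (Cf (Ef Cf σ₂) β).length :=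
        st.clen _ (E_mem hS st σ₂) β
      have h2 : (Cf (Ef Cf σ₂) β).length ≤ (Ef Cf σ).length := hsub.length_le
      have h3 : (Ef Cf σ).length ≤ (bf (Ef Cf σ)).length :=
        (st.bp _ (E_mem hS st σ)).length_le
      omega
  exfalso
  apply st.cdist _ (E_mem hS st σ₂) β β' hne
  set L₂ := (bf (Ef Cf σ₂)).length with hL₂
  have hL₂β : L₂ + 1 ≤ (Cf (Ef Cf σ₂) β).length := st.clen _ (E_mem hS st σ₂) β
  have hL₂β' : L₂ + 1 ≤ (Cf (Ef Cf σ₂) β').length := st.clen _ (E_mem hS st σ₂) β'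
  have hwβ : L₂ + 1 ≤ (Cf (Ef Cf σ) α).length := le_trans hL₂β hb1'.length_le
  calc (Cf (Ef Cf σ₂) β).take (L₂+1)
      = (Cf (Ef Cf σ) α).take (L₂+1) := take_eq_take_of_prefix hb1' hL₂β
    _ = (seg x m).take (L₂+1) :=
        (take_eq_take_of_prefix hxmw (by rw [length_seg]; omega)).symm
    _ = seg x (L₂+1) := take_seg x (by omega)
    _ = (seg x (Cf (Ef Cf σ) α).length).take (L₂+1) := (take_seg x (by omega)).symm
    _ = (Ef Cf ρ).take (L₂+1) := take_eq_take_of_prefix hρ (by rw [length_seg]; omega)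
    _ = (Cf (Ef Cf σ₂) β').take (L₂+1) := (take_eq_take_of_prefix hb2 hL₂β').symm

lemma T_sub : TT Cf ⊆ S := by
  rintro w ⟨σ, hp⟩
  exact hS.2.1 _ (E_mem hS st σ) w hp

lemma tk_mem_succs (σ : List W1) (α : W1) :
    (Cf (Ef Cf σ) α).take ((bf (Ef Cf σ)).length + 1) ∈ succs (TT Cf) (bf (Ef Cf σ)) := by
  have hclen := st.clen _ (E_mem hS st σ) α
  refine ⟨⟨α :: σ, (take_prefix _ _).trans prefix_rfl⟩, ?_, ?_⟩
  · exact prefix_of_prefix_le (st.bc _ (E_mem hS st σ) α) (take_prefix _ _)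
      (by rw [length_take]; omega)
  · rw [length_take]; omega

lemma b_mem_BN (σ : List W1) : bf (Ef Cf σ) ∈ BN (TT Cf) := by
  constructor
  · exact ⟨(Classical.arbitrary W1) :: σ, st.bc _ (E_mem hS st σ) _⟩
  · obtain ⟨a, b, hab⟩ := exists_pair_ne
    rw [Cardinal.two_le_iff]
    refine ⟨⟨_, tk_mem_succs hS st σ a⟩, ⟨_, tk_mem_succs hS st σ b⟩, ?_⟩
    intro h
    exact st.cdist _ (E_mem hS st σ) a b hab (congrArg Subtype.val h)

lemma BN_is_b {s : List W1} (hs : s ∈ BN (TT Cf)) : ∃ σ, s = bf (Ef Cf σ) := by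
  obtain ⟨t₁, t₂, ht₁, ht₂, hne⟩ := two_succs hs.2
  obtain ⟨τ₁, hp₁⟩ := ht₁.1
  obtain ⟨τ₂, hp₂⟩ := ht₂.1
  have hlen12 : t₁.length = t₂.length := by rw [ht₁.2.2, ht₂.2.2]
  have hinc1 : ¬ Ef Cf τ₁ <+: Ef Cf τ₂ := fun h =>
    hne (eq_of_prefix_len (prefix_of_prefix_le (hp₁.trans h) hp₂ hlen12.le) hlen12)
  have hinc2 : ¬ Ef Cf τ₂ <+: Ef Cf τ₁ := fun h =>
    hne (eq_of_prefix_len (prefix_of_prefix_le hp₁ (hp₂.trans h) hlen12.le) hlen12)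
  obtain ⟨σ, α, α', hαα, hc1, hc2⟩ := fork hS st τ₁ τ₂ hinc1 hinc2
  have hbτ₁ : bf (Ef Cf σ) <+: Ef Cf τ₁ := (st.bc _ (E_mem hS st σ) α).trans hc1
  have hbτ₂ : bf (Ef Cf σ) <+: Ef Cf τ₂ := (st.bc _ (E_mem hS st σ) α').trans hc2
  have hsτ₁ : s <+: Ef Cf τ₁ := ht₁.2.1.trans hp₁
  have hsτ₂ : s <+: Ef Cf τ₂ := ht₂.2.1.trans hp₂
  have l1 : (bf (Ef Cf σ)).length + 1 ≤ (Cf (Ef Cf σ) α).length := st.clen _ (E_mem hS st σ) α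
  have l2 : (bf (Ef Cf σ)).length + 1 ≤ (Cf (Ef Cf σ) α').length := st.clen _ (E_mem hS st σ) α'
  rcases lt_trichotomy s.length (bf (Ef Cf σ)).length with h | h | h
  · exfalso
    apply hne
    have e₁ : t₁ = (Ef Cf τ₁).take (s.length+1) := by
      rw [eq_take_of_prefix hp₁, ht₁.2.2]
    have e₂ : t₂ = (Ef Cf τ₂).take (s.length+1) := by
      rw [eq_take_of_prefix hp₂, ht₂.2.2]
    rw [e₁, e₂, ← take_eq_take_of_prefix hbτ₁ (by omega), ← take_eq_take_of_prefix hbτ₂ (by omega)]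
  · refine ⟨σ, ?_⟩
    rcases prefix_total hsτ₁ hbτ₁ with h' | h'
    · exact eq_of_prefix_len h' h
    · exact (eq_of_prefix_len h' h.symm).symm
  · exfalso
    apply st.cdist _ (E_mem hS st σ) α α' hαα
    calc (Cf (Ef Cf σ) α).take ((bf (Ef Cf σ)).length+1)
        = (Ef Cf τ₁).take ((bf (Ef Cf σ)).length+1) := take_eq_take_of_prefix hc1 l1
      _ = s.take ((bf (Ef Cf σ)).length+1) := (take_eq_take_of_prefix hsτ₁ (by omega)).symm
      _ = (Ef Cf τ₂).take ((bf (Ef Cf σ)).length+1) := take_eq_take_of_prefix hsτ₂ (by omega)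
      _ = (Cf (Ef Cf σ) α').take ((bf (Ef Cf σ)).length+1) :=
          (take_eq_take_of_prefix hc2 l2).symm

lemma wide_TT : Wide (TT Cf) := by
  refine ⟨⟨[], [], List.nil_prefix⟩, ?_, ?_, ?_⟩
  · rintro s ⟨σ, hp⟩ t ht
    exact ⟨σ, ht.trans hp⟩
  · rintro s ⟨σ, hp⟩
    exact ⟨bf (Ef Cf σ), b_mem_BN hS st σ, hp.trans (st.bp _ (E_mem hS st σ))⟩
  · intro s hs
    obtain ⟨σ, rfl⟩ := BN_is_b hS st hs
    refine le_antisymm (mk_succs_le _ _) ?_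
    rw [← mk_W1]
    refine Cardinal.mk_le_of_injective (f := fun α : W1 =>
      (⟨_, tk_mem_succs hS st σ α⟩ : ↥(succs (TT Cf) (bf (Ef Cf σ))))) ?_
    intro a b hab
    by_contra hne
    exact st.cdist _ (E_mem hS st σ) a b hne (congrArg Subtype.val hab)

lemma inj_TT : Set.InjOn f (branches (TT Cf)) := by
  intro x hx y hy hfe
  by_contra hne
  have hex : ∃ i, x i ≠ y i := Function.ne_iff.1 hne
  have hk : x (Nat.find hex) ≠ y (Nat.find hex) := Nat.find_spec hex
  set k := Nat.find hex with hkdef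
  set m := k + 1 with hm
  obtain ⟨τ, hp⟩ := hx m
  obtain ⟨τ', hp'⟩ := hy m
  have hlenseg : (seg x m).length = (seg y m).length := by rw [length_seg, length_seg]
  have hsegne : seg x m ≠ seg y m := by
    intro he
    apply hk
    have := List.getElem_of_eq he (i := k) (by rw [length_seg]; omega)
    rwa [getElem_seg, getElem_seg] at this
  have hinc1 : ¬ Ef Cf τ <+: Ef Cf τ' := fun h =>
    hsegne (eq_of_prefix_len (prefix_of_prefix_le (hp.trans h) hp' hlenseg.le) hlenseg)
  have hinc2 : ¬ Ef Cf τ' <+: Ef Cf τ := fun h =>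
    hsegne (eq_of_prefix_len (prefix_of_prefix_le hp (hp'.trans h) hlenseg.le) hlenseg)
  obtain ⟨σ, α, α', hαα', hc1, hc2⟩ := fork hS st τ τ' hinc1 hinc2
  have hbτ : bf (Ef Cf σ) <+: Ef Cf τ := (st.bc _ (E_mem hS st σ) α).trans hc1
  have hbτ' : bf (Ef Cf σ) <+: Ef Cf τ' := (st.bc _ (E_mem hS st σ) α').trans hc2
  have hmL : (bf (Ef Cf σ)).length < m := by
    by_contra hLm
    push_neg at hLm
    apply hsegne
    calc seg x m = (Ef Cf τ).take m := by
          conv_lhs => rw [eq_take_of_prefix hp, length_seg]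
      _ = (bf (Ef Cf σ)).take m := (take_eq_take_of_prefix hbτ hLm).symm
      _ = (Ef Cf τ').take m := take_eq_take_of_prefix hbτ' hLm
      _ = seg y m := by
          conv_rhs => rw [eq_take_of_prefix hp', length_seg]
  have fx := follow hS st hx hp hc1 hmL
  have fy := follow hS st hy hp' hc2 hmL
  have e1 := st.forces _ (E_mem hS st σ) α x (branches_mono (T_sub hS st) hx) fx
  have e2 := st.forces _ (E_mem hS st σ) α' y (branches_mono (T_sub hS st) hy) fy
  rw [hfe] at e1
  exact hαα' (st.dinj _ (E_mem hS st σ) (e1.symm.trans e2))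

end Construction
end S7
end

/-- on a wide subtree, a continuous map is either bounded or
injective. -/
theorem stmt7 (S : Set (List W1)) (hS : Wide S)
    (f : (ℕ → W1) → (ℕ → W1)) (hf : ContinuousOn f (branches S)) :
    ∃ T : Set (List W1), Wide T ∧ T ⊆ S ∧
      ((∃ β : W1, ∀ y ∈ f '' branches T, ∀ n, y n < β) ∨
        Set.InjOn f (branches T)) := by
  by_cases hB : ∃ T, Wide T ∧ T ⊆ S ∧ ∃ β : W1, ∀ y ∈ f '' branches T, ∀ n, y n < β
  · obtain ⟨T, h1, h2, h3⟩ := hB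
    exact ⟨T, h1, h2, Or.inl h3⟩
  · push_neg at hB
    have hunb : ∀ v ∈ S, ∀ β : W1, ∃ x ∈ branches S, seg x v.length = v ∧ ∃ n : ℕ, β ≤ f x n := by
      intro v hv β
      obtain ⟨y, hymem, n, hn⟩ := hB (restr S v) (S7.restr_wide hS hv) (S7.restr_sub v) β
      obtain ⟨x, hxbr, rfl⟩ := hymem
      exact ⟨x, S7.branches_mono (S7.restr_sub v) hxbr, S7.seg_eq_of_branch_restr hxbr,
        n, hn⟩
    obtain ⟨bf, Cf, Nf, df, st⟩ := S7.step_exists hS (S7.force_of_unbdd hf hunb)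
    exact ⟨S7.TT Cf, S7.wide_TT hS st, S7.T_sub hS st, Or.inr (S7.inj_TT hS st)⟩
end
end

section
/- If J is an iteration of wide trees, then its wrap wr(J) is a wide tree, the core C = dom J is contained in wr(J), and for every s ∈ C: s ⊆ stem(J(s)), wr(J)↾ₛ ⊆ J(s), and succ_{wr(J)}(s) = succ_{J(s)}(s). -/
noncomputable section

/-- An iteration of wide trees with core (domain) `C`. -/
def IsIteration (C : Set (List W1)) (J : List W1 → Set (List W1)) : Prop :=
  IsTree C ∧ (∀ u ∈ C, Wide (J u)) ∧
  (∀ u ∈ C, ∀ v ∈ C, u <+: v → v ∈ J u ∧ J v ⊆ restr (J u) v) ∧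
  (∀ u ∈ C, ∀ v ∈ C, u <+: v → v.length = u.length + 1 → u ∉ BN (J u) → J v = J u)

/-- The wrap of an iteration. -/
def wrap (C : Set (List W1)) (J : List W1 → Set (List W1)) : Set (List W1) :=
  {s | ∀ u ∈ C, (u <+: s ∧ u ≠ s) → s ∈ J u}
section Aux

variable {C : Set (List W1)} {J : List W1 → Set (List W1)}

lemma mkW1 : Cardinal.mk W1 = Cardinal.aleph 1 := Cardinal.mk_ord_toType _

lemma two_le_aleph1 : (2 : Cardinal) ≤ Cardinal.aleph 1 := by
  refine le_trans ?_ (Cardinal.aleph0_le_aleph 1)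
  exact_mod_cast (Cardinal.nat_lt_aleph0 2).le

lemma J_mono (hJ : IsIteration C J) {u v : List W1} (hu : u ∈ C) (hv : v ∈ C)
    (h : v <+: u) : J u ⊆ J v := fun t ht => ((hJ.2.2.1 v hv u hu h).2 ht).1

lemma mem_self (hJ : IsIteration C J) {s : List W1} (hs : s ∈ C) : s ∈ J s :=
  (hJ.2.2.1 s hs s hs List.prefix_rfl).1

lemma core_subset_wrap (hJ : IsIteration C J) : C ⊆ wrap C J :=
  fun s hs u hu h => (hJ.2.2.1 u hu s hs h.1).1

lemma nil_mem_wrap : ([] : List W1) ∈ wrap C J := by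
  intro u hu h
  exact absurd (List.eq_nil_of_prefix_nil h.1) h.2

lemma wrap_tree (hJ : IsIteration C J) : IsTree (wrap C J) := by
  intro s hs t hts u hu h
  obtain ⟨hut, hune⟩ := h
  rcases eq_or_ne u s with rfl | hne
  · exact absurd (hts.eq_of_length (le_antisymm hts.length_le hut.length_le)).symm hune
  · exact (hJ.2.1 u hu).2.1 s (hs u hu ⟨hut.trans hts, hne⟩) t hts

lemma exists_max_core_prefix (hC : IsTree C) (hCne : C.Nonempty) (s : List W1) :
    ∃ u ∈ C, u <+: s ∧ ∀ v ∈ C, v <+: s → v <+: u := by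
  classical
  have h0 : ([] : List W1) ∈ C := by
    obtain ⟨w, hw⟩ := hCne; exact hC w hw [] List.nil_prefix
  let S : Finset ℕ := (Finset.range (s.length + 1)).filter (fun n => s.take n ∈ C)
  have hSne : S.Nonempty := ⟨0, by simp [S, h0]⟩
  set N := S.max' hSne with hN
  have hNS : N ∈ S := S.max'_mem hSne
  have hNC : s.take N ∈ C := by simpa [S] using (Finset.mem_filter.mp hNS).2
  refine ⟨s.take N, hNC, List.take_prefix _ _, ?_⟩
  intro v hv hvs
  have hveq : v = s.take v.length := List.prefix_iff_eq_take.mp hvs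
  have hvS : v.length ∈ S := by
    refine Finset.mem_filter.mpr ⟨Finset.mem_range.mpr ?_, by rwa [← hveq]⟩
    exact Nat.lt_succ_of_le hvs.length_le
  have : v.length ≤ N := S.le_max' _ hvS
  rw [hveq]
  exact List.take_prefix_take_left this

lemma mem_J_of_max (hJ : IsIteration C J) {s u : List W1} (hs : s ∈ wrap C J)
    (hu : u ∈ C) (hus : u <+: s) : s ∈ J u := by
  rcases eq_or_ne u s with rfl | hne
  · exact mem_self hJ hu
  · exact hs u hu ⟨hus, hne⟩

lemma succs_wrap_eq (hJ : IsIteration C J) {s u : List W1}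
    (hu : u ∈ C) (hus : u <+: s) (hmax : ∀ v ∈ C, v <+: s → v <+: u) :
    succs (wrap C J) s = succs (J u) s := by
  ext t
  constructor
  · rintro ⟨htw, hst, hlen⟩
    refine ⟨?_, hst, hlen⟩
    have h1 : u <+: t := hus.trans hst
    have hne : u ≠ t := by
      intro h; subst h
      have h1 := hst.length_le
      have h2 := hus.length_le
      omega
    exact htw u hu ⟨h1, hne⟩
  · rintro ⟨htJ, hst, hlen⟩
    refine ⟨?_, hst, hlen⟩
    intro v hv hvt
    obtain ⟨hvt', hvne⟩ := hvt
    have h1 : v.length ≤ t.length := hvt'.length_le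
    have h2 : v.length ≠ t.length := fun h => hvne (hvt'.eq_of_length h)
    have h3 : v.length ≤ s.length := by omega
    have hvs : v <+: s := List.prefix_of_prefix_length_le hvt' hst h3
    exact J_mono hJ hu hv (hmax v hv hvs) htJ

lemma restr_J_eq (hJ : IsIteration C J) {s : List W1} (hs : s ∈ C) :
    restr (J s) s = J s := by
  refine Set.Subset.antisymm (fun t ht => ht.1) (fun t ht => ⟨ht, ?_⟩)
  have hd : s.dropLast ∈ C := hJ.1 s hs _ (List.dropLast_prefix s)
  exact ((hJ.2.2.1 s.dropLast hd s hs (List.dropLast_prefix s)).2 ht).2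

lemma restr_wrap_subset (hJ : IsIteration C J) {s : List W1} (hs : s ∈ C) :
    restr (wrap C J) s ⊆ J s := by
  rintro t ⟨htw, hcomp⟩
  rcases hcomp with hst | hts
  · rcases eq_or_ne s t with rfl | hne
    · exact mem_self hJ hs
    · exact htw s hs ⟨hst, hne⟩
  · exact (hJ.2.1 s hs).2.1 s (mem_self hJ hs) t hts

lemma exists_branch_ext (hJ : IsIteration C J) (hCne : C.Nonempty)
    {s : List W1} (hs : s ∈ wrap C J) :
    ∃ t ∈ BN (wrap C J), s <+: t := by
  classical
  obtain ⟨u, huC, hus, humax⟩ := exists_max_core_prefix hJ.1 hCne s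
  have hsJu : s ∈ J u := mem_J_of_max hJ hs huC hus
  have hw := hJ.2.1 u huC
  have hex : ∃ n : ℕ, ∃ t, t ∈ BN (J u) ∧ s <+: t ∧ t.length = n := by
    obtain ⟨t, htB, hst⟩ := hw.2.2.1 s hsJu
    exact ⟨t.length, t, htB, hst, rfl⟩
  obtain ⟨t, htB, hst, htlen⟩ := Nat.find_spec hex
  have hmin : ∀ w, w ∈ BN (J u) → s <+: w → t.length ≤ w.length := by
    intro w hwB hsw
    rw [htlen]
    exact Nat.find_min' hex ⟨w, hwB, hsw, rfl⟩
  -- no branching node of J u strictly between s (incl.) and t (excl.)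
  have hnoBN : ∀ w, s <+: w → w <+: t → w ≠ t → w ∉ BN (J u) := by
    intro w hsw hwt hwne hwB
    have h1 := hmin w hwB hsw
    have h2 : w.length ≠ t.length := fun h => hwne (hwt.eq_of_length h)
    have := hwt.length_le
    omega
  -- Claim A: for v ∈ C with u <+: v <+: t (proper), J v = J u
  have claimA : ∀ k (v : List W1), v ∈ C → v <+: t → v ≠ t → u <+: v →
      v.length = k → J v = J u := by
    intro k
    induction k using Nat.strong_induction_on with
    | _ k ih =>
      intro v hvC hvt hvne huv hvk
      rcases le_or_gt v.length u.length with hle | hlt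
      · rw [huv.eq_of_length (le_antisymm huv.length_le hle)]
      · have hvnil : v ≠ [] := by
          intro h; subst h; simp at hlt
        set w := v.dropLast with hwdef
        have hwlen : w.length = v.length - 1 := by simp [hwdef]
        have hwC : w ∈ C := hJ.1 v hvC w (List.dropLast_prefix v)
        have hwv : w <+: v := List.dropLast_prefix v
        have hwt : w <+: t := hwv.trans hvt
        have hvlt : v.length < t.length := by
          have := hvt.length_le
          have h2 : v.length ≠ t.length := fun h => hvne (hvt.eq_of_length h)
          omega
        have hwne : w ≠ t := by
          intro h
          have := congrArg List.length h
          rw [hwlen] at this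
          have hv0 : 0 < v.length := List.length_pos_iff.mpr hvnil
          omega
        have huw : u <+: w := by
          refine List.prefix_of_prefix_length_le huv hwv ?_
          rw [hwlen]; omega
        have hJw : J w = J u := by
          refine ih (v.length - 1) ?_ w hwC hwt hwne huw hwlen
          have hv0 : 0 < v.length := List.length_pos_iff.mpr hvnil
          omega
        -- show s <+: v (strictly) hence s <+: w
        have hsv : s <+: v := by
          rcases le_or_gt s.length v.length with h | h
          · exact List.prefix_of_prefix_length_le hst hvt h
          · exfalso
            have hvs : v <+: s := List.prefix_of_prefix_length_le hvt hst h.le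
            have := (humax v hvC hvs).length_le
            omega
        have hvnes : v ≠ s := by
          intro h; subst h
          have := (humax v hvC List.prefix_rfl).length_le
          omega
        have hslt : s.length < v.length := by
          have := hsv.length_le
          have h2 : s.length ≠ v.length := fun h => hvnes (hsv.eq_of_length h).symm
          omega
        have hsw : s <+: w := by
          refine List.prefix_of_prefix_length_le hsv hwv ?_
          rw [hwlen]; omega
        have hwnotB : w ∉ BN (J w) := by
          rw [hJw]
          exact hnoBN w hsw hwt hwne
        have hlen1 : v.length = w.length + 1 := by
          have hv0 : 0 < v.length := List.length_pos_iff.mpr hvnil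
          rw [hwlen]; omega
        rw [hJ.2.2.2 w hwC v hvC hwv hlen1 hwnotB, hJw]
  -- t ∈ wrap
  have htJu : t ∈ J u := htB.1
  have htw : t ∈ wrap C J := by
    intro v hv hvt
    obtain ⟨hvt', hvne⟩ := hvt
    rcases le_or_gt v.length u.length with hle | hlt
    · have hvu : v <+: u := List.prefix_of_prefix_length_le hvt' (hus.trans hst) hle
      exact J_mono hJ huC hv hvu htJu
    · have huv : u <+: v := List.prefix_of_prefix_length_le (hus.trans hst) hvt' hlt.le
      rw [claimA v.length v hv hvt' hvne huv rfl]
      exact htJu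
  -- v* : max core prefix of t; show J v* = J u
  obtain ⟨v, hvC, hvt, hvmax⟩ := exists_max_core_prefix hJ.1 hCne t
  have huv : u <+: v := hvmax u huC (hus.trans hst)
  have hJv : J v = J u := by
    rcases eq_or_ne v t with rfl | hvne
    · -- v = t ∈ C
      rcases eq_or_ne v u with rfl | hvu
      · rfl
      · have hvnil : v ≠ [] := by
          intro h; subst h
          exact hvu (List.eq_nil_of_prefix_nil huv).symm
        set w := v.dropLast with hwdef
        have hwC : w ∈ C := hJ.1 v hvC w (List.dropLast_prefix v)
        have hwv : w <+: v := List.dropLast_prefix v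
        have hwlen : w.length = v.length - 1 := by simp [hwdef]
        have hv0 : 0 < v.length := List.length_pos_iff.mpr hvnil
        have hulen : u.length < v.length := by
          have := huv.length_le
          have h2 : u.length ≠ v.length := fun h => hvu (huv.eq_of_length h).symm
          omega
        have huw : u <+: w := by
          refine List.prefix_of_prefix_length_le huv hwv ?_
          rw [hwlen]; omega
        have hwne : w ≠ v := by
          intro h
          have := congrArg List.length h
          rw [hwlen] at this; omega
        have hJw : J w = J u := claimA w.length w hwC (hwv.trans List.prefix_rfl) hwne huw rfl
        -- s <+: w
        have hsnev : s ≠ v := by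
          intro h; subst h
          have := (humax s hvC List.prefix_rfl).length_le
          have := huv.length_le
          omega
        have hslen : s.length < v.length := by
          rcases le_or_gt v.length s.length with h | h
          · exfalso
            have hvs : v <+: s := List.prefix_of_prefix_length_le hvt hst h
            have := (humax _ hvC hvs).length_le
            omega
          · exact h
        have hsw : s <+: w := by
          refine List.prefix_of_prefix_length_le hst (hwv.trans List.prefix_rfl) ?_
          rw [hwlen]; omega
        have hwnotB : w ∉ BN (J w) := by
          rw [hJw]
          exact hnoBN w hsw (hwv.trans List.prefix_rfl) hwne
        have hlen1 : v.length = w.length + 1 := by rw [hwlen]; omega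
        rw [hJ.2.2.2 w hwC v hvC hwv hlen1 hwnotB, hJw]
    · exact claimA v.length v hvC hvt hvne huv rfl
  have hseq : succs (wrap C J) t = succs (J u) t := by
    rw [succs_wrap_eq hJ hvC hvt hvmax, hJv]
  refine ⟨t, ⟨htw, ?_⟩, hst⟩
  rw [hseq]
  exact htB.2

lemma wrap_univ (hC : C = ∅) : wrap C J = Set.univ := by
  ext s
  simp [wrap, hC]

lemma succs_univ_card (s : List W1) :
    Cardinal.mk ↥(succs (Set.univ : Set (List W1)) s) = Cardinal.aleph 1 := by
  rw [← mkW1]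
  symm
  apply Cardinal.mk_congr
  refine Equiv.ofBijective
    (fun a => ⟨s ++ [a], Set.mem_univ _, List.prefix_append s [a], by simp⟩) ⟨?_, ?_⟩
  · intro a b hab
    have := congrArg (fun t : ↥(succs (Set.univ : Set (List W1)) s) => (t : List W1)) hab
    simpa using this
  · rintro ⟨t, ht, hpre, hlen⟩
    obtain ⟨r, rfl⟩ := hpre
    have hr : r.length = 1 := by simp at hlen; omega
    obtain ⟨a, rfl⟩ := List.length_eq_one_iff.mp hr
    exact ⟨a, rfl⟩

lemma wide_wrap (hJ : IsIteration C J) : Wide (wrap C J) := by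
  rcases C.eq_empty_or_nonempty with hC | hCne
  · rw [wrap_univ hC]
    have hBN : ∀ s : List W1, s ∈ BN (Set.univ : Set (List W1)) := by
      intro s
      refine ⟨Set.mem_univ _, ?_⟩
      rw [succs_univ_card s]
      exact two_le_aleph1
    exact ⟨⟨[], Set.mem_univ _⟩, fun _ _ _ _ => Set.mem_univ _,
      fun s _ => ⟨s, hBN s, List.prefix_rfl⟩, fun s _ => succs_univ_card s⟩
  · refine ⟨⟨[], nil_mem_wrap⟩, wrap_tree hJ, fun s hs => exists_branch_ext hJ hCne hs, ?_⟩
    intro s hsB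
    obtain ⟨u, huC, hus, humax⟩ := exists_max_core_prefix hJ.1 hCne s
    have hseq : succs (wrap C J) s = succs (J u) s := succs_wrap_eq hJ huC hus humax
    have hsJu : s ∈ J u := mem_J_of_max hJ hsB.1 huC hus
    have hsB' : s ∈ BN (J u) := ⟨hsJu, by rw [← hseq]; exact hsB.2⟩
    rw [hseq]
    exact (hJ.2.1 u huC).2.2.2 s hsB'

end Aux

/-- the wrap of an iteration is a wide tree containing the core,
and for `s ∈ C`: `s ⊆ stem(J(s))` (i.e. `J(s)↾ₛ = J(s)`), `wr(J)↾ₛ ⊆ J(s)`,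
and `succ_{wr(J)}(s) = succ_{J(s)}(s)`. -/
theorem stmt9 (C : Set (List W1)) (J : List W1 → Set (List W1))
    (hJ : IsIteration C J) :
    Wide (wrap C J) ∧ C ⊆ wrap C J ∧
      ∀ s ∈ C, restr (J s) s = J s ∧ restr (wrap C J) s ⊆ J s ∧
        succs (wrap C J) s = succs (J s) s := by
    refine ⟨wide_wrap hJ, core_subset_wrap hJ, fun s hs => ⟨restr_J_eq hJ hs, restr_wrap_subset hJ hs, ?_⟩⟩
    exact succs_wrap_eq hJ hs List.prefix_rfl (fun v _ hv => hv)

end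
end

section
/- Let J be an iteration of wide trees with core C = dom J, and let C' be a tree with C ⊆ C' ⊆ wr(J). Define J' on C' by J'(s) = J(s) for s ∈ C, and J'(s) = J(proj_C(s))↾ₛ for s ∈ C' \ C, where proj_C(s) is the longest initial segment of s in C. Then J' is an iteration, J ⊆ J', and wr(J') = wr(J). -/
noncomputable section

/-- `u` is the projection of `s` to `C`: the longest initial segment of `s`
belonging to `C`. -/
def IsProj (C : Set (List W1)) (s u : List W1) : Prop :=
  u ∈ C ∧ u <+: s ∧ ∀ v ∈ C, v <+: s → v <+: u


lemma not_two_le_iff {α : Type*} (s : Set α) :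
    ¬ (2 ≤ Cardinal.mk s) ↔ s.Subsingleton := by
  rw [Cardinal.two_le_iff]
  push_neg
  constructor
  · intro h a ha b hb
    have := h ⟨a, ha⟩ ⟨b, hb⟩
    simpa using this
  · intro h a b
    exact Subtype.ext (h a.2 b.2)

lemma proj_exists {C : Set (List W1)} (hC : IsTree C) (hCne : C.Nonempty) (s : List W1) :
    ∃ u, IsProj C s u := by
  classical
  obtain ⟨c, hc⟩ := hCne
  have hnil : [] ∈ C := hC c hc [] (List.nil_prefix)
  set P : ℕ → Prop := fun n => s.take n ∈ C with hPdef
  have h0 : P 0 := by simpa [hPdef] using hnil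
  set N := Nat.findGreatest P s.length with hN
  have hNP : P N := Nat.findGreatest_spec (Nat.zero_le _) h0
  refine ⟨s.take N, hNP, List.take_prefix N s, ?_⟩
  intro v hv hvs
  have hvP : P v.length := by
    have : v = s.take v.length := List.prefix_iff_eq_take.mp hvs
    simpa [hPdef, ← this] using hv
  have hle : v.length ≤ N := Nat.le_findGreatest hvs.length_le hvP
  refine List.prefix_of_prefix_length_le hvs (List.take_prefix N s) ?_
  simp only [List.length_take]
  exact le_min hle hvs.length_le

lemma proj_unique {C : Set (List W1)} {s u v : List W1}
    (hu : IsProj C s u) (hv : IsProj C s v) : u = v := by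
  have h1 : u <+: v := hv.2.2 u hu.1 hu.2.1
  have h2 : v <+: u := hu.2.2 v hv.1 hv.2.1
  exact h1.eq_of_length (le_antisymm h1.length_le h2.length_le)

lemma proj_eq_of_prefix {C : Set (List W1)} {u v p q : List W1} (hC : IsTree C)
    (huC : u ∉ C) (huv : u <+: v) (hp : IsProj C u p) (hq : IsProj C v q) : p = q := by
  have hqu : q <+: u := by
    rcases List.prefix_or_prefix_of_prefix huv hq.2.1 with h | h
    · exact absurd (hC q hq.1 u h) huC
    · exact h
  have h1 : q <+: p := hp.2.2 q hq.1 hqu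
  have h2 : p <+: q := hq.2.2 p hp.1 (hp.2.1.trans huv)
  exact h2.eq_of_length (le_antisymm h2.length_le h1.length_le)

lemma succs_restr {T : Set (List W1)} {s t : List W1} (h : s <+: t) :
    succs (restr T s) t = succs T t := by
  ext t'
  simp only [succs, restr, Set.mem_setOf_eq]
  constructor
  · rintro ⟨⟨h1, _⟩, h2, h3⟩; exact ⟨h1, h2, h3⟩
  · rintro ⟨h1, h2, h3⟩; exact ⟨⟨h1, Or.inl (h.trans h2)⟩, h2, h3⟩

lemma subsingleton_succs_restr {T : Set (List W1)} {s t : List W1}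
    (h : t <+: s) (hne : t ≠ s) : (succs (restr T s) t).Subsingleton := by
  have hlen : t.length < s.length := by
    rcases lt_or_eq_of_le h.length_le with h' | h'
    · exact h'
    · exact absurd (h.eq_of_length h') hne
  have key : ∀ x ∈ succs (restr T s) t, x = s.take (t.length + 1) := by
    rintro x ⟨⟨_, hcomp⟩, htx, hlx⟩
    have hxs : x <+: s := by
      rcases hcomp with h' | h'
      · have : s.length = x.length := le_antisymm h'.length_le (by omega)
        rw [(h'.eq_of_length this)]
      · exact h'
    rw [List.prefix_iff_eq_take.mp hxs, hlx]
  intro a ha b hb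
  rw [key a ha, key b hb]

lemma BN_restr {T : Set (List W1)} (s : List W1) :
    BN (restr T s) = {t ∈ BN T | s <+: t} := by
  ext t
  simp only [BN, Set.mem_setOf_eq]
  constructor
  · rintro ⟨ht', hcard⟩
    obtain ⟨ht, hcomp⟩ := ht'
    have hst : s <+: t := by
      by_contra hns
      have hts : t <+: s := by
        rcases hcomp with h' | h'
        · exact absurd h' hns
        · exact h'
      have hne : t ≠ s := fun h => hns (h ▸ List.prefix_refl t)
      exact ((not_two_le_iff _).mpr (subsingleton_succs_restr hts hne)) hcard
    rw [succs_restr hst] at hcard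
    exact ⟨⟨ht, hcard⟩, hst⟩
  · rintro ⟨⟨ht, hcard⟩, hst⟩
    refine ⟨⟨ht, Or.inl hst⟩, ?_⟩
    rw [succs_restr hst]
    exact hcard

lemma wide_restr {T : Set (List W1)} {s : List W1} (hT : Wide T) (hs : s ∈ T) :
    Wide (restr T s) := by
  obtain ⟨hne, htree, hbn, hcard⟩ := hT
  refine ⟨⟨s, hs, Or.inl (List.prefix_refl s)⟩, ?_, ?_, ?_⟩
  · rintro t ⟨ht, hcomp⟩ t' ht'
    refine ⟨htree t ht t' ht', ?_⟩
    rcases hcomp with h' | h'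
    · rcases List.prefix_or_prefix_of_prefix ht' h' with h'' | h''
      · exact Or.inr h''
      · exact Or.inl h''
    · exact Or.inr (ht'.trans h')
  · rintro t ⟨ht, hcomp⟩
    rcases hcomp with h' | h'
    · obtain ⟨b, hb, htb⟩ := hbn t ht
      refine ⟨b, ?_, htb⟩
      rw [BN_restr]
      exact ⟨hb, h'.trans htb⟩
    · obtain ⟨b, hb, hsb⟩ := hbn s hs
      refine ⟨b, ?_, h'.trans hsb⟩
      rw [BN_restr]
      exact ⟨hb, hsb⟩
  · intro t htb
    rw [BN_restr] at htb
    rw [succs_restr htb.2]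
    exact hcard t htb.1

lemma comp_succ {T : Set (List W1)} {u v : List W1} (hT : IsTree T) (hv : v ∈ T)
    (huv : u <+: v) (hl : v.length = u.length + 1) (hns : (succs T u).Subsingleton) :
    ∀ t ∈ T, (u <+: t ∨ t <+: u) → (v <+: t ∨ t <+: v) := by
  intro t ht h
  rcases h with h | h
  · rcases Nat.lt_or_ge u.length t.length with hlt | hge
    · set t' := t.take (u.length + 1) with ht'def
      have ht'p : t' <+: t := List.take_prefix _ _
      have ht'len : t'.length = u.length + 1 := by
        simp only [ht'def, List.length_take]
        omega
      have hut' : u <+: t' := List.prefix_of_prefix_length_le h ht'p (by omega)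
      have h1 : t' ∈ succs T u := ⟨hT t ht t' ht'p, hut', ht'len⟩
      have h2 : v ∈ succs T u := ⟨hv, huv, hl⟩
      have := hns h1 h2
      exact Or.inl (this ▸ ht'p)
    · have : t = u := (h.eq_of_length (le_antisymm h.length_le hge)).symm
      exact Or.inr (by rw [this]; exact huv)
  · exact Or.inr (h.trans huv)


/-- the natural extension of an iteration to a larger core
`C ⊆ C' ⊆ wr(J)` is an iteration with the same wrap. -/
theorem stmt11 (C C' : Set (List W1)) (J J' : List W1 → Set (List W1))
    (hJ : IsIteration C J) (hCne : C.Nonempty) (hC' : IsTree C')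
    (h1 : C ⊆ C') (h2 : C' ⊆ wrap C J)
    (hagree : ∀ s ∈ C, J' s = J s)
    (hnew : ∀ s ∈ C' \ C, ∀ u, IsProj C s u → J' s = restr (J u) s) :
    IsIteration C' J' ∧ wrap C' J' = wrap C J := by
  classical
  obtain ⟨hCtree, hwide, h3, h4⟩ := hJ
  have hmono : ∀ u ∈ C, ∀ p ∈ C, u <+: p → J p ⊆ J u := by
    intro u hu p hp h t ht
    exact ((h3 u hu p hp h).2 ht).1
  have hselfmem : ∀ u ∈ C, u ∈ J u := fun u hu => (h3 u hu u hu (List.prefix_refl u)).1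
  have hselfsub : ∀ u ∈ C, ∀ t ∈ J u, u <+: t ∨ t <+: u := by
    intro u hu t ht
    exact ((h3 u hu u hu (List.prefix_refl u)).2 ht).2
  have hwrapJ : ∀ s ∈ C', ∀ u ∈ C, u <+: s → u ≠ s → s ∈ J u := by
    intro s hs u hu hp hne
    exact h2 hs u hu ⟨hp, hne⟩
  have hJ'new : ∀ s ∈ C', s ∉ C → ∃ p, IsProj C s p ∧ J' s = restr (J p) s := by
    intro s hs hsC
    obtain ⟨p, hp⟩ := proj_exists hCtree hCne s
    exact ⟨p, hp, hnew s ⟨hs, hsC⟩ p hp⟩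
  have hmemJp : ∀ s ∈ C', s ∉ C → ∀ p, IsProj C s p → s ∈ J p := by
    intro s hs hsC p hp
    exact hwrapJ s hs p hp.1 hp.2.1 (fun h => hsC (h ▸ hp.1))
  have hsub_of_not : ∀ T : Set (List W1), ∀ u ∈ T, u ∉ BN T → (succs T u).Subsingleton := by
    intro T u hu hnb
    rw [← not_two_le_iff]
    intro h
    exact hnb ⟨hu, h⟩
  have cond2 : ∀ u ∈ C', Wide (J' u) := by
    intro u hu
    by_cases huC : u ∈ C
    · rw [hagree u huC]; exact hwide u huC
    · obtain ⟨p, hp, he⟩ := hJ'new u hu huC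
      rw [he]
      exact wide_restr (hwide p hp.1) (hmemJp u hu huC p hp)
  have cond3 : ∀ u ∈ C', ∀ v ∈ C', u <+: v → v ∈ J' u ∧ J' v ⊆ restr (J' u) v := by
    intro u hu v hv huv
    by_cases hvC : v ∈ C
    · have huC : u ∈ C := hCtree v hvC u huv
      rw [hagree u huC, hagree v hvC]
      exact h3 u huC v hvC huv
    · obtain ⟨q, hq, heq⟩ := hJ'new v hv hvC
      have hvJq : v ∈ J q := hmemJp v hv hvC q hq
      by_cases huC : u ∈ C
      · rw [hagree u huC, heq]
        have huq : u <+: q := hq.2.2 u huC huv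
        have hsub : J q ⊆ J u := hmono u huC q hq.1 huq
        refine ⟨hwrapJ v hv u huC huv (fun h => hvC (h ▸ huC)), ?_⟩
        rintro t ⟨ht, hc⟩
        exact ⟨hsub ht, hc⟩
      · obtain ⟨p, hp, hep⟩ := hJ'new u hu huC
        have hpq : p = q := proj_eq_of_prefix hCtree huC huv hp hq
        subst hpq
        rw [hep, heq]
        refine ⟨⟨hvJq, Or.inl huv⟩, ?_⟩
        rintro t ⟨ht, hc⟩
        refine ⟨⟨ht, ?_⟩, hc⟩
        rcases hc with h' | h'
        · exact Or.inl (huv.trans h')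
        · rcases List.prefix_or_prefix_of_prefix huv h' with h'' | h''
          · exact Or.inl h''
          · exact Or.inr h''
  have cond4 : ∀ u ∈ C', ∀ v ∈ C', u <+: v → v.length = u.length + 1 →
      u ∉ BN (J' u) → J' v = J' u := by
    intro u hu v hv huv hl hbn
    by_cases hvC : v ∈ C
    · have huC : u ∈ C := hCtree v hvC u huv
      rw [hagree u huC] at hbn
      rw [hagree u huC, hagree v hvC]
      exact h4 u huC v hvC huv hl hbn
    · obtain ⟨q, hq, heq⟩ := hJ'new v hv hvC
      have hvJq : v ∈ J q := hmemJp v hv hvC q hq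
      by_cases huC : u ∈ C
      · have hqu : q = u := by
          have ha : u <+: q := hq.2.2 u huC huv
          have hb : q <+: u := by
            have hq1 : q <+: v := hq.2.1
            have hne : q ≠ v := fun h => hvC (h ▸ hq.1)
            have hlt : q.length < v.length :=
              lt_of_le_of_ne hq1.length_le (fun h => hne (hq1.eq_of_length h))
            exact List.prefix_of_prefix_length_le hq1 huv (by omega)
          exact hb.eq_of_length (le_antisymm hb.length_le ha.length_le)
        subst hqu
        rw [hagree q huC] at hbn
        rw [heq, hagree q huC]
        have hns : (succs (J q) q).Subsingleton :=
          hsub_of_not (J q) q (hselfmem q huC) hbn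
        ext t
        constructor
        · rintro ⟨ht, _⟩; exact ht
        · intro ht
          exact ⟨ht, comp_succ (hwide q huC).2.1 hvJq huv hl hns t ht
            (hselfsub q huC t ht)⟩
      · obtain ⟨p, hp, hep⟩ := hJ'new u hu huC
        have hpq : p = q := proj_eq_of_prefix hCtree huC huv hp hq
        subst hpq
        rw [hep] at hbn
        rw [heq, hep]
        have hns : (succs (J p) u).Subsingleton := by
          have := hsub_of_not (restr (J p) u) u
            ⟨hmemJp u hu huC p hp, Or.inl (List.prefix_refl u)⟩ hbn
          rwa [succs_restr (List.prefix_refl u)] at this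
        ext t
        constructor
        · rintro ⟨ht, hc⟩
          refine ⟨ht, ?_⟩
          rcases hc with h' | h'
          · exact Or.inl (huv.trans h')
          · rcases List.prefix_or_prefix_of_prefix huv h' with h'' | h''
            · exact Or.inl h''
            · exact Or.inr h''
        · rintro ⟨ht, hc⟩
          exact ⟨ht, comp_succ (hwide p hp.1).2.1 hvJq huv hl hns t ht hc⟩
  refine ⟨⟨hC', cond2, cond3, cond4⟩, ?_⟩
  ext s
  constructor
  · intro hs u hu hcond
    have := hs u (h1 hu) hcond
    rwa [hagree u hu] at this
  · intro hs u hu hcond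
    by_cases huC : u ∈ C
    · rw [hagree u huC]
      exact hs u huC hcond
    · have huC' : u ∈ C' := hu
      obtain ⟨p, hp, hep⟩ := hJ'new u huC' huC
      rw [hep]
      refine ⟨hs p hp.1 ⟨hp.2.1.trans hcond.1, ?_⟩, Or.inl hcond.1⟩
      intro h
      subst h
      have hup : u <+: p := hcond.1
      have hpu : p <+: u := hp.2.1
      have : u = p := hup.eq_of_length (le_antisymm hup.length_le hpu.length_le)
      rw [this] at huC
      exact huC hp.1

end
end

section
/- Let M be a transitive set, P ∈ M a WT-forcing, and Q a WT-forcing which is an M-extension of P (P ⊏_M Q). If trees T, T' ∈ P are incompatible in P (no S ∈ P with S ⊆ T and S ⊆ T'), then T, T' remain incompatible in P ∪ Q, provided M models enough set theory (ZFC without power set plus existence of ω₁ and P(ω₁)) and contains the relevant dense sets; specifically it suffices that condition (C) of the extension holds: for every pre-dense D ∈ M, D ⊆ P and every U ∈ Q, the set D↑U = {s ∈ U : ∃S ∈ D (U↾ₛ ⊆ S)} weakly covers U. -/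
noncomputable section

/-- `H` meets the infinite sequence `x`. -/
def Meets (H : Set (List W1)) (x : ℕ → W1) : Prop := ∃ m, seg x m ∈ H

/-- `H` weakly covers `T` with parameter `β`: `H` meets every branch of `T`
having some term `≥ β`. -/
def WeaklyCovers (H : Set (List W1)) (T : Set (List W1)) (β : W1) : Prop :=
  ∀ x ∈ branches T, (∃ n, β ≤ x n) → Meets H x
/-- `P ⊏ Q`: `Q` is dense in `Q ∪ P` and refines `P`. -/
def ExtWT (P Q : Set (Set (List W1))) : Prop :=
  DenseIn Q (Q ∪ P) ∧ ∀ U ∈ Q, ∃ T ∈ P, U ⊆ T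

/-- `D↑U`: the strings `s ∈ U` whose restriction `U↾ₛ` lies below some member
of `D`. -/
def upArrow (D : Set (Set (List W1))) (U : Set (List W1)) : Set (List W1) :=
  {s ∈ U | ∃ S ∈ D, restr U s ⊆ S}

-- aux lemmas
lemma seg_length (x : ℕ → W1) (m : ℕ) : (seg x m).length = m := List.length_ofFn

lemma seg_getElem (x : ℕ → W1) (m i : ℕ) (h : i < (seg x m).length) : (seg x m)[i] = x i := by
  simp [seg]

lemma seg_prefix (x : ℕ → W1) {m k : ℕ} (h : m ≤ k) : seg x m <+: seg x k := by
  rw [List.prefix_iff_eq_take]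
  apply List.ext_getElem
  · simp [seg_length]; omega
  · intro i h1 h2
    rw [seg_getElem, List.getElem_take, seg_getElem]

lemma branches_mono {S T : Set (List W1)} (h : S ⊆ T) : branches S ⊆ branches T :=
  fun _ hx m => h (hx m)

instance : Nonempty W1 := by
  show Nonempty (Cardinal.aleph 1).ord.ToType
  rw [Ordinal.toType_nonempty_iff_ne_zero]
  intro h
  have := congrArg Ordinal.card h
  rw [Cardinal.card_ord, Ordinal.card_zero] at this
  exact (Cardinal.aleph_pos 1).ne' this

lemma exists_extension {S : Set (List W1)} (hS : Wide S) {s : List W1} (hs : s ∈ S) :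
    ∃ t ∈ S, s <+: t ∧ s.length < t.length := by
  obtain ⟨b, hb, hsb⟩ := hS.2.2.1 s hs
  have h2 : 2 ≤ Cardinal.mk ↥(succs S b) := hb.2
  have : (succs S b).Nonempty := by
    rw [Set.nonempty_iff_ne_empty]
    intro he
    rw [he] at h2
    simp only [Cardinal.mk_eq_zero] at h2
    exact absurd h2 (by norm_num)
  obtain ⟨t, ht, hbt, hlen⟩ := this
  exact ⟨t, ht, hsb.trans hbt, lt_of_le_of_lt hsb.length_le (by omega)⟩

lemma exists_branch {S : Set (List W1)} (hS : Wide S) {t : List W1} (ht : t ∈ S) :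
    ∃ x ∈ branches S, seg x t.length = t := by
  classical
  have hstep : ∀ s : {l : List W1 // l ∈ S}, ∃ s' : {l : List W1 // l ∈ S},
      s.1 <+: s'.1 ∧ s.1.length < s'.1.length := by
    rintro ⟨s, hs⟩
    obtain ⟨t', ht', h1, h2⟩ := exists_extension hS hs
    exact ⟨⟨t', ht'⟩, h1, h2⟩
  choose g hg1 hg2 using hstep
  set f : ℕ → {l : List W1 // l ∈ S} := fun n => g^[n] ⟨t, ht⟩ with hf
  have hfsucc : ∀ n, f (n + 1) = g (f n) := fun n => Function.iterate_succ_apply' g n _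
  have hf0 : f 0 = ⟨t, ht⟩ := rfl
  have hchain : ∀ m k, m ≤ k → (f m).1 <+: (f k).1 := by
    intro m k h
    induction k with
    | zero =>
      have hm0 : m = 0 := Nat.le_zero.mp h
      subst hm0; exact List.prefix_refl _
    | succ k ih =>
      rcases Nat.lt_or_ge m (k + 1) with h' | h'
      · exact (ih (by omega)).trans (by rw [hfsucc]; exact hg1 (f k))
      · obtain rfl : m = k + 1 := by omega
        exact List.prefix_refl _
  have hflen : ∀ n, n + t.length ≤ (f n).1.length := by
    intro n
    induction n with
    | zero => simp [hf0]
    | succ n ih =>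
      have := hg2 (f n)
      rw [hfsucc]
      omega
  set x : ℕ → W1 := fun n => ((f (n + 1)).1).getD n (Classical.arbitrary W1) with hxdef
  have hx : ∀ n k (hn : n < (f k).1.length), x n = (f k).1[n]'hn := by
    intro n k hn
    have hn1 : n < (f (n + 1)).1.length := lt_of_lt_of_le (by omega) (hflen (n + 1))
    have hxn : x n = (f (n + 1)).1[n] := List.getD_eq_getElem _ _ hn1
    rcases le_total (n + 1) k with h | h
    · rw [hxn]; exact (hchain _ _ h).getElem hn1
    · rw [hxn]; exact ((hchain _ _ h).getElem hn).symm
  have hseg : ∀ k m, m ≤ (f k).1.length → seg x m = (f k).1.take m := by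
    intro k m hm
    apply List.ext_getElem
    · simp [seg_length]; omega
    · intro i h1 h2
      rw [seg_getElem, List.getElem_take]
      exact hx i k (by rw [seg_length] at h1; omega)
  refine ⟨x, fun m => ?_, ?_⟩
  · have hm : m ≤ (f m).1.length := le_trans (by omega) (hflen m)
    rw [hseg m m hm]
    exact hS.2.1 _ (f m).2 _ (List.take_prefix _ _)
  · rw [hseg 0 t.length (by simp [hf0])]
    simp [hf0]

lemma exists_big_succ {S : Set (List W1)} (hS : Wide S) (β : W1) {b : List W1}
    (hb : b ∈ BN S) :
    ∃ t' ∈ succs S b, ∃ h : b.length < t'.length, β ≤ t'[b.length] := by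
  by_contra hcon
  push_neg at hcon
  have hcard := hS.2.2.2 b hb
  have hinj : Cardinal.mk ↥(succs S b) ≤ Cardinal.mk ↥(Set.Iio β) := by
    have hlt : ∀ t' : ↥(succs S b), b.length < t'.1.length := fun t' => by
      have := t'.2.2.2; omega
    refine Cardinal.mk_le_of_injective
      (f := fun t' : ↥(succs S b) => (⟨t'.1[b.length]'(hlt t'), ?_⟩ : Set.Iio β)) ?_
    · exact hcon t'.1 t'.2 (hlt t')
    · rintro ⟨t1, ht1⟩ ⟨t2, ht2⟩ heq
      simp only [Subtype.mk.injEq] at heq ⊢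
      apply List.ext_getElem (by rw [ht1.2.2, ht2.2.2])
      intro i hi1 hi2
      have hlen1 : t1.length = b.length + 1 := ht1.2.2
      rcases Nat.lt_or_ge i b.length with h | h
      · rw [← ht1.2.1.getElem h, ← ht2.2.1.getElem h]
      · obtain rfl : i = b.length := by omega
        exact congrArg Subtype.val heq
  have hIio : Cardinal.mk ↥(Set.Iio β) < Cardinal.aleph 1 := Cardinal.mk_Iio_ord_toType β
  rw [hcard] at hinj
  exact absurd (lt_of_le_of_lt hinj hIio) (lt_irrefl _)

lemma dense_aux {P : Set (Set (List W1))} (hP : WTForcing P) {R T : Set (List W1)}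
    (hR : R ∈ P) :
    ∃ S ∈ P, S ⊆ R ∧ (S ⊆ T ∨ branches S ∩ branches T = ∅) := by
  by_cases h : R ⊆ T
  · exact ⟨R, hR, subset_rfl, Or.inl h⟩
  · obtain ⟨s, hsR, hsT⟩ := Set.not_subset.mp h
    refine ⟨restr R s, hP.2.2 R hR s hsR, fun t ht => ht.1, Or.inr ?_⟩
    rw [Set.eq_empty_iff_forall_notMem]
    rintro x ⟨hx1, hx2⟩
    have h1 := hx1 s.length
    have h2 : seg x s.length = s := by
      rcases h1.2 with h' | h'
      · exact (h'.eq_of_length (seg_length x s.length).symm).symm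
      · exact h'.eq_of_length (seg_length x s.length)
    exact hsT (h2 ▸ hx2 s.length)

/-- incompatibility in `P` is preserved in `P ∪ Q` for an
`M`-extension `Q` of `P`, where `M` (modelling enough set theory) is rendered by
the family of its subsets of `P`, assumed to contain the relevant dense sets
`D(T) ∩ D(T')`, and condition (C) of the extension holds. -/
theorem stmt16 (M : Set (Set (Set (List W1)))) (P Q : Set (Set (List W1)))
    (hP : WTForcing P) (hQ : WTForcing Q) (hPQ : ExtWT P Q)
    (hC : ∀ D ∈ M, D ⊆ P → PreDenseIn D P →
      ∀ U ∈ Q, ∃ β : W1, WeaklyCovers (upArrow D U) U β)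
    (hrelevant : ∀ T ∈ P, ∀ T' ∈ P,
      {S | S ∈ P ∧ (S ⊆ T ∨ branches S ∩ branches T = ∅) ∧
        (S ⊆ T' ∨ branches S ∩ branches T' = ∅)} ∈ M)
    (T T' : Set (List W1)) (hT : T ∈ P) (hT' : T' ∈ P)
    (hinc : ¬ ∃ S ∈ P, S ⊆ T ∧ S ⊆ T') :
    ¬ ∃ S ∈ P ∪ Q, S ⊆ T ∧ S ⊆ T' := by
  rintro ⟨S, hSmem, hST, hST'⟩
  rcases hSmem with hSP | hSQ
  · exact hinc ⟨S, hSP, hST, hST'⟩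
  set D : Set (Set (List W1)) :=
    {S | S ∈ P ∧ (S ⊆ T ∨ branches S ∩ branches T = ∅) ∧
      (S ⊆ T' ∨ branches S ∩ branches T' = ∅)} with hDdef
  have hDM : D ∈ M := hrelevant T hT T' hT'
  have hDP : D ⊆ P := fun S hS => hS.1
  have hpre : PreDenseIn D P := by
    intro R hR
    obtain ⟨S1, hS1P, hS1R, h1⟩ := dense_aux hP (T := T) hR
    obtain ⟨S2, hS2P, hS2S1, h2⟩ := dense_aux hP (T := T') hS1P
    have h1' : S2 ⊆ T ∨ branches S2 ∩ branches T = ∅ := by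
      rcases h1 with h | h
      · exact Or.inl (hS2S1.trans h)
      · exact Or.inr (Set.eq_empty_of_subset_empty
          (h ▸ Set.inter_subset_inter_left _ (branches_mono hS2S1)))
    exact ⟨S2, ⟨hS2P, S2, ⟨hS2P, h1', h2⟩, subset_rfl⟩, hS2S1.trans hS1R⟩
  obtain ⟨β, hβ⟩ := hC D hDM hDP hpre S hSQ
  have hSwide : Wide S := hQ.2.1 S hSQ
  obtain ⟨t0, ht0⟩ := hSwide.1
  obtain ⟨b, hb, -⟩ := hSwide.2.2.1 t0 ht0
  obtain ⟨t', ht', hlt, hbig⟩ := exists_big_succ hSwide β hb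
  obtain ⟨x, hx, hxseg⟩ := exists_branch hSwide ht'.1
  have h1 : x b.length = t'[b.length]'hlt := by
    have h2 := List.getElem_of_eq hxseg (i := b.length) (by rw [seg_length]; exact hlt)
    rwa [seg_getElem] at h2
  have hxb : β ≤ x b.length := by rw [h1]; exact hbig
  obtain ⟨m, hmS, S', hS'D, hsub'⟩ := hβ x hx ⟨b.length, hxb⟩
  have hxS' : x ∈ branches S' := by
    intro k
    apply hsub'
    refine ⟨hx k, ?_⟩
    rcases le_total m k with h | h
    · exact Or.inl (seg_prefix x h)
    · exact Or.inr (seg_prefix x h)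
  obtain ⟨hS'P, hd1, hd2⟩ := hS'D
  have hS'T : S' ⊆ T := by
    rcases hd1 with h | h
    · exact h
    · exact absurd h (Set.nonempty_iff_ne_empty.mp ⟨x, hxS', branches_mono hST hx⟩)
  have hS'T' : S' ⊆ T' := by
    rcases hd2 with h | h
    · exact h
    · exact absurd h (Set.nonempty_iff_ne_empty.mp ⟨x, hxS', branches_mono hST' hx⟩)
  exact hinc ⟨S', hS'P, hS'T, hS'T'⟩

end
end
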